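/- arXiv:math-ph/0506030 — 6 statements merged into one kernel-verified Lean document; each statement's English description precedes it below -/
import Mathlib

section
/- Let A and B be bounded operators on 𝓚 with P_0 B Ω = 0. Then for every b ≥ 0, |⟨Ω, A τ_{ib}(B) Ω⟩| ≤ ‖A‖ ‖B‖ e^{−γ b}. -/
open scoped BigOperators

section Aux

variable {K : Type} [NormedAddCommGroup K] [InnerProductSpace ℂ K] [CompleteSpace K]

/-- `e^{cH} Ω = Ω` when `H Ω = 0`. -/
lemma aux_exp_apply_eq_self (H : K →L[ℂ] K) (Ω : K) (hHΩ : H Ω = 0) (c : ℂ) :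
    NormedSpace.exp (c • H) Ω = Ω := by
  have hpow : ∀ n : ℕ, n ≠ 0 → ((c • H) ^ n) Ω = 0 := by
    intro n hn
    obtain ⟨m, rfl⟩ := Nat.exists_eq_succ_of_ne_zero hn
    rw [pow_succ, ContinuousLinearMap.mul_apply, ContinuousLinearMap.smul_apply, hHΩ,
      smul_zero, map_zero]
  have hsum := NormedSpace.expSeries_summable' (𝕂 := ℂ) (c • H)
  rw [NormedSpace.exp_eq_tsum (𝕂 := ℂ)]
  have happly := (ContinuousLinearMap.apply ℂ K Ω)  -- not used directly
  have : (∑' n : ℕ, ((n.factorial : ℂ))⁻¹ • (c • H) ^ n) Ω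
      = ∑' n : ℕ, (((n.factorial : ℂ))⁻¹ • (c • H) ^ n) Ω := by
    exact (ContinuousLinearMap.apply ℂ K Ω).map_tsum hsum
  rw [this]
  rw [tsum_eq_single 0 (by
    intro n hn
    rw [ContinuousLinearMap.smul_apply, hpow n hn, smul_zero])]
  simp

/-- membership transfer of real spectrum to complex spectrum. -/
lemma aux_mem_spectrum_complex (H : K →L[ℂ] K) {x : ℝ} (hx : x ∈ spectrum ℝ H) :
    (x : ℂ) ∈ spectrum ℂ H := by
  rw [spectrum.mem_iff] at hx ⊢
  rw [IsScalarTower.algebraMap_apply ℝ ℂ (K →L[ℂ] K)] at hx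
  simpa using hx

/-- Main spectral gap estimate: for `ψ ⊥ ker H`,
`‖e^{-bH} ψ‖ ≤ e^{-γ b} ‖ψ‖`. -/
lemma aux_gap_decay (H : K →L[ℂ] K) (hpos : H.IsPositive)
    (γ : ℝ) (hγ : 0 < γ)
    (hgap : ∀ r : ℝ, 0 < r → r < γ → (r : ℂ) ∉ spectrum ℂ H)
    (ψ : K) (hψ : ψ ∈ (LinearMap.ker (H : K →ₗ[ℂ] K))ᗮ)
    (b : ℝ) (hb : 0 ≤ b) :
    ‖NormedSpace.exp ((-b : ℂ) • H) ψ‖ ≤ Real.exp (-γ * b) * ‖ψ‖ := by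
  have hsa : IsSelfAdjoint H := hpos.isSelfAdjoint
  have hH0 : (0 : K →L[ℂ] K) ≤ H := (ContinuousLinearMap.nonneg_iff_isPositive H).mpr hpos
  -- spectrum ℝ H ⊆ {0} ∪ [γ, ∞)
  have hspec : ∀ x ∈ spectrum ℝ H, x = 0 ∨ γ ≤ x := by
    intro x hx
    have hx0 : 0 ≤ x := spectrum_nonneg_of_nonneg hH0 hx
    rcases eq_or_lt_of_le hx0 with h | h
    · exact Or.inl h.symm
    · by_contra hcon
      push_neg at hcon
      exact hgap x h hcon.2 (aux_mem_spectrum_complex H hx)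
  -- rewrite the exponential via cfc
  have hsmulsa : IsSelfAdjoint ((-b : ℝ) • H) := IsSelfAdjoint.all (-b) |>.smul hsa
  have hexp1 : NormedSpace.exp ((-b : ℂ) • H) = NormedSpace.exp ((-b : ℝ) • H) := by
    have : ((-b : ℂ)) • H = ((-b : ℝ)) • H := by
      rw [show ((-b : ℂ)) = (((-b : ℝ) : ℂ)) by push_cast; ring, Complex.coe_smul]
    rw [this]
  have hcexp : Continuous fun x : ℝ => Real.exp (-b * x) :=
    Real.continuous_exp.comp (continuous_const.mul continuous_id)
  have hexp2 : NormedSpace.exp ((-b : ℝ) • H) = cfc (fun x : ℝ => Real.exp (-b * x)) H := by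
    have h1 : (fun x : ℝ => Real.exp (-b * x)) = fun x : ℝ => Real.exp ((-b) • x) := by
      funext x; rw [smul_eq_mul]
    rw [h1, cfc_comp_smul (-b) Real.exp H Real.continuous_exp.continuousOn hsa,
      CFC.real_exp_eq_normedSpace_exp hsmulsa]
  -- the approximate kernel projection
  set f : ℝ → ℝ := fun x => max (1 - x / γ) 0 with hf
  have hcf : Continuous f := ((continuous_const.sub (continuous_id.div_const γ)).max continuous_const)
  set p : K →L[ℂ] K := cfc f H with hp
  have hpsa : IsSelfAdjoint p := cfc_predicate f H
  have hf0 : f 0 = 1 := by simp [hf]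
  have hfγ : ∀ x : ℝ, γ ≤ x → f x = 0 := by
    intro x hx
    have : 1 - x / γ ≤ 0 := by
      rw [sub_nonpos]
      exact (le_div_iff₀ hγ).mpr (by linarith)
    simp [hf, max_eq_right this]
  -- H * p = 0
  have hHp : H * p = 0 := by
    have h1 : H * p = cfc (fun x : ℝ => x * f x) H := by
      conv_lhs => rw [← cfc_id ℝ H hsa]
      rw [← cfc_mul (id : ℝ → ℝ) f H (continuous_id.continuousOn) (hcf.continuousOn)]
      rfl
    rw [h1, cfc_congr (g := fun _ : ℝ => (0 : ℝ)) (fun x hx => by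
      rcases hspec x hx with h | h
      · simp [h]
      · simp [hfγ x h]), cfc_const 0 H hsa]
    simp
  -- p * p = p
  have hpp : p * p = p := by
    rw [hp, ← cfc_mul f f H (hcf.continuousOn) (hcf.continuousOn)]
    exact cfc_congr fun x hx => by
      rcases hspec x hx with h | h
      · simp [h, hf0]
      · simp [hfγ x h]
  -- p ψ = 0
  have hpψ : p ψ = 0 := by
    have hker : p ψ ∈ LinearMap.ker (H : K →ₗ[ℂ] K) := by
      rw [LinearMap.mem_ker]
      have := congrArg (fun T : K →L[ℂ] K => T ψ) hHp
      simpa [ContinuousLinearMap.mul_apply] using this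
    have hinner : (inner ℂ (p ψ) (p ψ) : ℂ) = 0 := by
      have hadj : ContinuousLinearMap.adjoint p = p := hpsa
      have h1 : (inner ℂ (p ψ) (p ψ) : ℂ) = inner ℂ (p (p ψ)) ψ := by
        rw [← ContinuousLinearMap.adjoint_inner_left p, hadj]
      have h2 : p (p ψ) ∈ LinearMap.ker (H : K →ₗ[ℂ] K) := by
        rw [LinearMap.mem_ker]
        have := congrArg (fun T : K →L[ℂ] K => T (p ψ)) hHp
        simpa [ContinuousLinearMap.mul_apply] using this
      rw [h1]
      exact hψ _ h2
    exact inner_self_eq_zero.mp hinner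
  -- decomposition
  set c : ℝ := 1 - Real.exp (-b * γ) with hc
  set g : ℝ → ℝ := fun x => Real.exp (-b * x) - c * f x with hg
  have hcg : Continuous g := hcexp.sub (continuous_const.mul hcf)
  have hdecomp : cfc (fun x : ℝ => Real.exp (-b * x)) H = cfc g H + c • p := by
    rw [hp, ← cfc_smul c f H (hcf.continuousOn),
        ← cfc_add H g (fun x => c • f x) (hcg.continuousOn) (((continuous_const (y := c)).smul hcf : Continuous fun x => c • f x).continuousOn)]
    exact cfc_congr fun x _ => by simp only [hg, smul_eq_mul]; ring
  -- norm bound on cfc g H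
  have hnorm : ‖cfc g H‖ ≤ Real.exp (-b * γ) := by
    apply norm_cfc_le (Real.exp_nonneg _)
    intro x hx
    rw [Real.norm_eq_abs]
    rcases hspec x hx with h | h
    · rw [h]
      simp [hg, hf0, hc, abs_of_nonneg (Real.exp_nonneg _)]
    · have h1 : g x = Real.exp (-b * x) := by simp [hg, hfγ x h]
      rw [h1, abs_of_nonneg (Real.exp_nonneg _)]
      apply Real.exp_le_exp.mpr
      have : b * γ ≤ b * x := mul_le_mul_of_nonneg_left h hb
      linarith
  -- finish
  calc ‖NormedSpace.exp ((-b : ℂ) • H) ψ‖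
      = ‖cfc g H ψ‖ := by
        rw [hexp1, hexp2, hdecomp]
        simp [ContinuousLinearMap.add_apply, hpψ]
    _ ≤ ‖cfc g H‖ * ‖ψ‖ := (cfc g H).le_opNorm ψ
    _ ≤ Real.exp (-b * γ) * ‖ψ‖ := by
        exact mul_le_mul_of_nonneg_right hnorm (norm_nonneg _)
    _ = Real.exp (-γ * b) * ‖ψ‖ := by rw [show -b * γ = -γ * b by ring]

end Aux

/-- For `B` with `P₀ B Ω = 0` (expressed as `B Ω ⊥ ker H`, with `P₀` the orthogonal
projection onto `ker H`) and `b ≥ 0`: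
`|⟨Ω, A τ_{ib}(B) Ω⟩| ≤ ‖A‖ ‖B‖ e^{−γ b}`, where `τ_{ib}(B) = e^{−bH} B e^{bH}`. -/
theorem trivial_imaginary_time_bound
    {K : Type} [NormedAddCommGroup K] [InnerProductSpace ℂ K] [CompleteSpace K]
    (H : K →L[ℂ] K) (hpos : H.IsPositive)
    (Ω : K) (hΩ : ‖Ω‖ = 1) (hHΩ : H Ω = 0)
    (γ : ℝ) (hγ : 0 < γ)
    (hgap : ∀ r : ℝ, 0 < r → r < γ → (r : ℂ) ∉ spectrum ℂ H)
    (A B : K →L[ℂ] K) (hBΩ : B Ω ∈ (LinearMap.ker (H : K →ₗ[ℂ] K))ᗮ)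
    (b : ℝ) (hb : 0 ≤ b) :
    ‖(inner ℂ Ω
        ((A * (NormedSpace.exp ((-b : ℂ) • H) * B * NormedSpace.exp ((b : ℂ) • H))) Ω)
        : ℂ)‖ ≤ ‖A‖ * ‖B‖ * Real.exp (-γ * b) := by
  have hEΩ : NormedSpace.exp ((b : ℂ) • H) Ω = Ω := aux_exp_apply_eq_self H Ω hHΩ _
  have key : (A * (NormedSpace.exp ((-b : ℂ) • H) * B * NormedSpace.exp ((b : ℂ) • H))) Ω
      = A (NormedSpace.exp ((-b : ℂ) • H) (B Ω)) := by
    simp only [ContinuousLinearMap.mul_apply, hEΩ]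
  rw [key]
  have hdecay := aux_gap_decay H hpos γ hγ hgap (B Ω) hBΩ b hb
  have hBΩnorm : ‖B Ω‖ ≤ ‖B‖ := by
    calc ‖B Ω‖ ≤ ‖B‖ * ‖Ω‖ := B.le_opNorm Ω
      _ = ‖B‖ := by rw [hΩ, mul_one]
  calc ‖(inner ℂ Ω (A (NormedSpace.exp ((-b : ℂ) • H) (B Ω))) : ℂ)‖
      ≤ ‖Ω‖ * ‖A (NormedSpace.exp ((-b : ℂ) • H) (B Ω))‖ := norm_inner_le_norm _ _
    _ ≤ ‖A‖ * ‖NormedSpace.exp ((-b : ℂ) • H) (B Ω)‖ := by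
        rw [hΩ, one_mul]; exact A.le_opNorm _
    _ ≤ ‖A‖ * (Real.exp (-γ * b) * ‖B Ω‖) :=
        mul_le_mul_of_nonneg_left hdecay (norm_nonneg _)
    _ ≤ ‖A‖ * ‖B‖ * Real.exp (-γ * b) := by
        rw [mul_assoc]
        apply mul_le_mul_of_nonneg_left _ (norm_nonneg _)
        rw [mul_comm (Real.exp (-γ * b))]
        exact mul_le_mul_of_nonneg_right hBΩnorm (Real.exp_nonneg _)
end

section
/- Let A and B be bounded operators on 𝓚 with P_0 B Ω = 0. Then for every T > 0 and every θ ∈ [0, π], |⟨Ω, A e^{i T e^{iθ} H} B Ω⟩| ≤ ‖A‖ ‖B‖ e^{−T γ sin θ}, where e^{i T e^{iθ} H} denotes the exponential of the bounded operator i T e^{iθ} H. -/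
open scoped ComplexConjugate

-- exp fixes the kernel
lemma exp_fix {K : Type} [NormedAddCommGroup K] [InnerProductSpace ℂ K] [CompleteSpace K]
    (W : K →L[ℂ] K) (u : K) (hu : W u = 0) : NormedSpace.exp W u = u := by
  rw [NormedSpace.exp_eq_tsum (𝕂 := ℂ)]
  have hs : Summable (fun n : ℕ => (n.factorial⁻¹ : ℂ) • W ^ n) :=
    NormedSpace.expSeries_summable' W
  have hmap := (ContinuousLinearMap.apply ℂ K u).map_tsum hs
  simp only [ContinuousLinearMap.apply_apply] at hmap
  rw [hmap, tsum_eq_single 0]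
  · simp
  · intro n hn
    obtain ⟨m, rfl⟩ := Nat.exists_eq_succ_of_ne_zero hn
    simp only [ContinuousLinearMap.smul_apply, pow_succ, ContinuousLinearMap.mul_apply, hu,
      map_zero, smul_zero]

open scoped ComplexConjugate

lemma gap_lemma {K : Type} [NormedAddCommGroup K] [InnerProductSpace ℂ K] [CompleteSpace K]
    (H : K →L[ℂ] K) (hpos : H.IsPositive) (γ : ℝ) (hγ : 0 < γ)
    (hgap : ∀ r : ℝ, 0 < r → r < γ → (r : ℂ) ∉ spectrum ℂ H)
    (w : K) (hw : w ∈ (LinearMap.ker (H : K →ₗ[ℂ] K))ᗮ) :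
    γ * ‖w‖ ^ 2 ≤ (inner ℂ w (H w) : ℂ).re := by
  have hsa : IsSelfAdjoint H := hpos.isSelfAdjoint
  have hH0 : (0 : K →L[ℂ] K) ≤ H := (ContinuousLinearMap.nonneg_iff_isPositive H).mpr hpos
  have hspec : ∀ x ∈ spectrum ℝ H, x = 0 ∨ γ ≤ x := by
    intro x hx
    have hx0 : 0 ≤ x := spectrum_nonneg_of_nonneg hH0 hx
    rcases hx0.eq_or_lt with h | h
    · exact Or.inl h.symm
    · refine Or.inr (le_of_not_gt fun hlt => ?_)
      exact hgap x h hlt ((IsSelfAdjoint.coe_mem_spectrum_complex hsa).mpr hx)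
  set g : ℝ → ℝ := fun x => max (1 - x / γ) 0 with hgdef
  have hgcont : Continuous g := by fun_prop
  set P : K →L[ℂ] K := cfc g H with hPdef
  have hg0 : g 0 = 1 := by simp [hgdef]
  have hgγ : ∀ x : ℝ, γ ≤ x → g x = 0 := by
    intro x hx
    simp only [hgdef, max_eq_right_iff, sub_nonpos]
    rw [le_div_iff₀ hγ, one_mul]; exact hx
  -- H * P = 0
  have hHP : H * P = 0 := by
    nth_rewrite 1 [← cfc_id ℝ H hsa]
    rw [← cfc_mul _ _ H continuousOn_id hgcont.continuousOn]
    rw [cfc_congr (g := fun _ => (0:ℝ)) ?_, cfc_const 0 H hsa, map_zero]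
    intro x hx
    rcases hspec x hx with h | h
    · simp [h, id]
    · simp [id, hgγ x h]
  have hPwker : P w ∈ LinearMap.ker (H : K →ₗ[ℂ] K) := by
    have : H (P w) = (H * P) w := rfl
    simp [LinearMap.mem_ker, this, hHP]
  have hinnerPw : (inner ℂ w (P w) : ℂ) = 0 := by
    rw [← inner_conj_symm]
    rw [(Submodule.mem_orthogonal _ w).mp hw (P w) hPwker]
    simp
  -- positivity of H - γ•1 + γ•P
  have hS : (0 : K →L[ℂ] K) ≤ cfc (fun x => x - γ + γ * g x) H := by
    apply cfc_nonneg
    intro x hx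
    rcases hspec x hx with h | h
    · simp [h, hg0]
    · rw [hgγ x h]; linarith
  have hSeq : cfc (fun x => x - γ + γ * g x) H = H - γ • (1 : K →L[ℂ] K) + γ • P := by
    rw [cfc_add (R := ℝ) H _ _ (by fun_prop) (by fun_prop),
      cfc_sub (R := ℝ) (fun x => x) (fun _ => γ) H (by fun_prop) (by fun_prop),
      cfc_id' ℝ H hsa, cfc_const_mul γ g H hgcont.continuousOn, cfc_const γ H hsa,
      Algebra.algebraMap_eq_smul_one]
  rw [hSeq] at hS
  have hSpos := (ContinuousLinearMap.nonneg_iff_isPositive _).mp hS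
  have h0 := hSpos.inner_nonneg_right w
  simp only [ContinuousLinearMap.add_apply, ContinuousLinearMap.sub_apply,
    ContinuousLinearMap.smul_apply, ContinuousLinearMap.one_apply, inner_add_right,
    inner_sub_right, inner_smul_right, hinnerPw, mul_zero, add_zero] at h0
  have hsm1 : (inner ℂ w (γ • w) : ℂ) = (γ : ℂ) * ((‖w‖ : ℂ) ^ 2) := by
    rw [RCLike.real_smul_eq_coe_smul (K := ℂ), inner_smul_right,
      inner_self_eq_norm_sq_to_K (𝕜 := ℂ)]
    norm_cast
  have hsm2 : (inner ℂ w (γ • P w) : ℂ) = 0 := by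
    rw [RCLike.real_smul_eq_coe_smul (K := ℂ), inner_smul_right, hinnerPw, mul_zero]
  rw [hsm1, hsm2, add_zero] at h0
  have h0' : (0:ℝ) ≤ (inner ℂ w (H w) : ℂ).re - γ * ‖w‖ ^ 2 := by
    have : (((γ : ℂ)) * ((‖w‖ : ℂ) ^ 2)).re = γ * ‖w‖ ^ 2 := by
      norm_cast
    simpa [Complex.sub_re, this] using (Complex.le_def.mp h0).1
  linarith

open scoped BigOperators

/-- For `B` with `P₀ B Ω = 0` (expressed as `B Ω ⊥ ker H`), `T > 0` and `θ ∈ [0, π]`: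
`|⟨Ω, A e^{i T e^{iθ} H} B Ω⟩| ≤ ‖A‖ ‖B‖ e^{−T γ sin θ}`. -/
theorem semicircle_contour_bound
    {K : Type} [NormedAddCommGroup K] [InnerProductSpace ℂ K] [CompleteSpace K]
    (H : K →L[ℂ] K) (hpos : H.IsPositive)
    (Ω : K) (hΩ : ‖Ω‖ = 1) (hHΩ : H Ω = 0)
    (γ : ℝ) (hγ : 0 < γ)
    (hgap : ∀ r : ℝ, 0 < r → r < γ → (r : ℂ) ∉ spectrum ℂ H)
    (A B : K →L[ℂ] K) (hBΩ : B Ω ∈ (LinearMap.ker (H : K →ₗ[ℂ] K))ᗮ)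
    (T : ℝ) (hT : 0 < T) (θ : ℝ) (hθ : θ ∈ Set.Icc 0 Real.pi) :
    ‖(inner ℂ Ω
        ((A * NormedSpace.exp ((Complex.I * T * Complex.exp (Complex.I * θ)) • H) * B) Ω)
        : ℂ)‖ ≤ ‖A‖ * ‖B‖ * Real.exp (-(T * γ * Real.sin θ)) := by
  obtain ⟨hθ0, hθπ⟩ := hθ
  have hsin : 0 ≤ Real.sin θ := Real.sin_nonneg_of_nonneg_of_le_pi hθ0 hθπ
  have hsa : IsSelfAdjoint H := hpos.isSelfAdjoint
  set z : ℂ := Complex.I * T * Complex.exp (Complex.I * θ) with hz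
  have hzre : z.re = -(T * Real.sin θ) := by
    rw [hz, mul_comm Complex.I (θ:ℂ), Complex.exp_mul_I]
    simp [Complex.mul_re, Complex.mul_im, Complex.cos_ofReal_re, Complex.sin_ofReal_re,
      Complex.cos_ofReal_im, Complex.sin_ofReal_im]
  set M : K →L[ℂ] K := z • H with hM
  set v : K := B Ω with hv
  set f : ℝ → K := fun t => NormedSpace.exp (t • M) v with hf
  have htsmul : ∀ t : ℝ, t • M = (((t:ℂ)) * z) • H := by
    intro t
    rw [hM, ← smul_assoc]
    norm_cast
  -- exp of multiples of H fixes ker H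
  have hfix : ∀ (c : ℂ) (u : K), H u = 0 → NormedSpace.exp (c • H) u = u := by
    intro c u hu
    exact exp_fix _ _ (by simp [hu])
  -- f t remains orthogonal to ker H
  have horth : ∀ t : ℝ, f t ∈ (LinearMap.ker (H : K →ₗ[ℂ] K))ᗮ := by
    intro t
    rw [Submodule.mem_orthogonal]
    intro u hu
    have huH : H u = 0 := LinearMap.mem_ker.mp hu
    have hadj : ContinuousLinearMap.adjoint (NormedSpace.exp (t • M))
        = NormedSpace.exp ((starRingEnd ℂ ((t:ℂ) * z)) • H) := by
      rw [← ContinuousLinearMap.star_eq_adjoint, NormedSpace.star_exp, htsmul, star_smul,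
        hsa.star_eq]
      rfl
    have h1 : (inner ℂ u (f t) : ℂ)
        = inner ℂ (ContinuousLinearMap.adjoint (NormedSpace.exp (t • M)) u) v := by
      rw [ContinuousLinearMap.adjoint_inner_left]
    rw [h1, hadj, hfix _ u huH]
    exact (Submodule.mem_orthogonal _ v).mp hBΩ u hu
  -- derivative of f
  have hfd : ∀ t : ℝ, HasDerivAt f (M (f t)) t := by
    intro t
    have h1 := hasDerivAt_exp_smul_const (𝕂 := ℝ) M t
    have h2 := (((ContinuousLinearMap.apply ℂ K v).restrictScalars
      ℝ).hasFDerivAt.comp_hasDerivAt t h1)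
    have hcomm : NormedSpace.exp (t • M) * M = M * NormedSpace.exp (t • M) :=
      (((Commute.refl M).smul_left t).exp_left).eq
    simp only [ContinuousLinearMap.coe_restrictScalars', ContinuousLinearMap.apply_apply,
      Function.comp] at h2
    convert h2 using 1
    · rfl
    rw [hcomm]
    rfl
  -- im of ⟪x, H x⟫ vanishes
  have hrealinner : ∀ x : K, (inner ℂ x (H x) : ℂ).im = 0 := by
    intro x
    have hsymm := (ContinuousLinearMap.isSelfAdjoint_iff_isSymmetric.mp hsa)
    have hc : (starRingEnd ℂ) (inner ℂ x (H x) : ℂ) = inner ℂ x (H x) := by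
      rw [inner_conj_symm]
      exact hsymm x x
    exact Complex.conj_eq_iff_im.mp hc
  set g : ℝ → ℝ := fun t => (inner ℂ (f t) (f t) : ℂ).re with hgdef
  have hgnorm : ∀ t, g t = ‖f t‖ ^ 2 := by
    intro t
    rw [hgdef]
    simp only []
    rw [inner_self_eq_norm_sq_to_K (𝕜 := ℂ)]
    norm_cast
  have hgnn : ∀ t, 0 ≤ g t := fun t => (hgnorm t) ▸ sq_nonneg _
  have hgd : ∀ t, HasDerivAt g (2 * z.re * (inner ℂ (f t) (H (f t)) : ℂ).re) t := by
    intro t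
    have hi := (hfd t).inner ℂ (hfd t)
    have hr := Complex.reCLM.hasFDerivAt.comp_hasDerivAt t hi
    convert hr using 1
    · rfl
    · rfl
    · rfl
    have h1 : (inner ℂ (M (f t)) (f t) : ℂ) = (starRingEnd ℂ) (inner ℂ (f t) (M (f t)) : ℂ) :=
      (inner_conj_symm _ _).symm
    have h2 : (inner ℂ (f t) (M (f t)) : ℂ) = z * inner ℂ (f t) (H (f t)) := by
      rw [hM]
      simp [inner_smul_right]
    change 2 * z.re * (inner ℂ (f t) (H (f t))).re
      = (inner ℂ (f t) (M (f t)) + inner ℂ (M (f t)) (f t)).re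
    simp only [Complex.reCLM_apply, Complex.add_re, h1, h2, Complex.conj_re, Complex.mul_re,
      hrealinner (f t), mul_zero, sub_zero]
    ring
  set x : ℝ := T * γ * Real.sin θ with hx
  have hxnn : 0 ≤ x := by positivity
  set c : ℝ := 2 * x with hc
  have hder_le : ∀ t, 2 * z.re * (inner ℂ (f t) (H (f t)) : ℂ).re ≤ -c * g t := by
    intro t
    have hb := gap_lemma H hpos γ hγ hgap (f t) (horth t)
    have hz2 : 2 * z.re ≤ 0 := by rw [hzre]; nlinarith
    have h3 := mul_le_mul_of_nonpos_left hb hz2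
    have h4 : 2 * z.re * (γ * ‖f t‖ ^ 2) = -c * g t := by
      rw [hzre, hgnorm t, hc, hx]; ring
    linarith
  set φ : ℝ → ℝ := fun t => Real.exp (c * t) * g t with hφ
  have hφd : ∀ t, HasDerivAt φ
      (Real.exp (c * t) * (c * 1) * g t
        + Real.exp (c * t) * (2 * z.re * (inner ℂ (f t) (H (f t)) : ℂ).re)) t := by
    intro t
    exact (((hasDerivAt_id t).const_mul c).exp).mul (hgd t)
  have hφ'le : ∀ t, Real.exp (c * t) * (c * 1) * g t
        + Real.exp (c * t) * (2 * z.re * (inner ℂ (f t) (H (f t)) : ℂ).re) ≤ 0 := by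
    intro t
    have he := Real.exp_pos (c * t)
    have h5 := hder_le t
    nlinarith [mul_le_mul_of_nonneg_left h5 he.le]
  have hanti : Antitone φ := by
    apply antitone_of_deriv_nonpos
    · exact fun t => (hφd t).differentiableAt
    · intro t
      rw [(hφd t).deriv]
      exact hφ'le t
  have hf0 : f 0 = v := by
    rw [hf]
    simp only [zero_smul, NormedSpace.exp_zero, ContinuousLinearMap.one_apply]
  have key := hanti (by norm_num : (0:ℝ) ≤ 1)
  have hkey : Real.exp c * g 1 ≤ ‖v‖ ^ 2 := by
    have h0 : φ 0 = ‖v‖ ^ 2 := by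
      rw [hφ]; simp [hgnorm 0, hf0]
    have h1 : φ 1 = Real.exp c * g 1 := by rw [hφ]; norm_num
    rw [h0, h1] at key
    exact key
  have hnorm1 : ‖f 1‖ ≤ Real.exp (-x) * ‖v‖ := by
    have hsq : ‖f 1‖ ^ 2 ≤ (Real.exp (-x) * ‖v‖) ^ 2 := by
      have hee : (Real.exp (-x) * ‖v‖) ^ 2 = Real.exp (-c) * ‖v‖ ^ 2 := by
        rw [mul_pow, sq (Real.exp (-x)), ← Real.exp_add, hc]
        ring_nf
      rw [hee, ← hgnorm 1]
      have hepos := Real.exp_pos c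
      rw [Real.exp_neg]
      have := mul_le_mul_of_nonneg_left hkey (inv_nonneg.mpr hepos.le)
      rw [← mul_assoc, inv_mul_cancel₀ hepos.ne', one_mul] at this
      exact this
    exact le_of_pow_le_pow_left₀ two_ne_zero (by positivity) hsq
  -- final assembly
  have happ : ((A * NormedSpace.exp (z • H) * B) Ω) = A (NormedSpace.exp (z • H) v) := by
    simp [ContinuousLinearMap.mul_apply, hv]
  have hEv : NormedSpace.exp (z • H) v = f 1 := by
    rw [hf]
    norm_num [hM]
  calc ‖(inner ℂ Ω ((A * NormedSpace.exp (z • H) * B) Ω) : ℂ)‖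
      ≤ ‖Ω‖ * ‖(A * NormedSpace.exp (z • H) * B) Ω‖ := norm_inner_le_norm _ _
    _ = ‖A (NormedSpace.exp (z • H) v)‖ := by rw [hΩ, one_mul, happ]
    _ ≤ ‖A‖ * ‖NormedSpace.exp (z • H) v‖ := A.le_opNorm _
    _ ≤ ‖A‖ * (Real.exp (-x) * ‖v‖) := by
        apply mul_le_mul_of_nonneg_left _ (norm_nonneg A)
        rw [hEv]
        exact hnorm1
    _ ≤ ‖A‖ * (Real.exp (-x) * ‖B‖) := by
        apply mul_le_mul_of_nonneg_left _ (norm_nonneg A)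
        apply mul_le_mul_of_nonneg_left _ (Real.exp_pos _).le
        calc ‖v‖ ≤ ‖B‖ * ‖Ω‖ := B.le_opNorm Ω
          _ = ‖B‖ := by rw [hΩ, mul_one]
    _ = ‖A‖ * ‖B‖ * Real.exp (-x) := by ring
end

section
/- For z ∈ ℂ with Im z > 0, T > 0 and w ∈ ℝ, define F_{z,T}(w) = (1/(2πi)) ∫_{−T}^{T} e^{iwt}/(t − z) dt. Then for every w > 0 and every T with 0 < 2|z| < T, |F_{z,T}(w) − e^{iwz}| ≤ (2/π) [ (1 − e^{−wT})/(wT) + e^{−wT} ]. -/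
open scoped BigOperators
open Complex intervalIntegral

private lemma log_neg_of_im_pos' {u : ℂ} (h : 0 < u.im) :
    Complex.log (-u) = Complex.log u - Real.pi * I := by
  apply Complex.ext <;>
    simp [Complex.log_re, Complex.log_im, Complex.arg_neg_eq_arg_sub_pi_of_im_pos h]

private lemma log_neg_of_im_neg' {u : ℂ} (h : u.im < 0) :
    Complex.log (-u) = Complex.log u + Real.pi * I := by
  apply Complex.ext <;>
    simp [Complex.log_re, Complex.log_im, Complex.arg_neg_eq_arg_add_pi_of_im_neg h]

/-- For `w > 0` and `0 < 2|z| < T`, with `F_{z,T}(w) = (1/2πi)∫_{−T}^{T} e^{iwt}/(t−z) dt`: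
`|F_{z,T}(w) − e^{iwz}| ≤ (2/π)[(1 − e^{−wT})/(wT) + e^{−wT}]`. -/
theorem F_bound_pos (z : ℂ) (hz : 0 < z.im) (T w : ℝ) (hw : 0 < w)
    (hT : 2 * ‖z‖ < T) :
    ‖(1 / (2 * Real.pi * Complex.I)) *
        (∫ t in (-T)..T, Complex.exp (Complex.I * w * t) / (t - z)) -
      Complex.exp (Complex.I * w * z)‖ ≤
    2 / Real.pi * ((1 - Real.exp (-(w * T))) / (w * T) + Real.exp (-(w * T))) := by
  have habs : (0:ℝ) ≤ ‖z‖ := norm_nonneg z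
  have hT0 : 0 < T := lt_of_le_of_lt (by linarith) hT
  have hza : ‖z‖ ≤ T / 2 := by linarith
  have hre : |z.re| ≤ T / 2 := le_trans (Complex.abs_re_le_norm z) hza
  have him : |z.im| ≤ T / 2 := le_trans (Complex.abs_im_le_norm z) hza
  have hreT : z.re < T := by cases abs_le.1 hre with | intro h1 h2 => linarith
  have hreT' : -T < z.re := by cases abs_le.1 hre with | intro h1 h2 => linarith
  have himT : z.im < T := by cases abs_le.1 him with | intro h1 h2 => linarith
  set c : ℂ := Complex.exp (Complex.I * w * z) with hc
  set f : ℂ → ℂ := fun ζ => Complex.exp (Complex.I * w * ζ) / (ζ - z) with hf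
  set g : ℂ → ℂ := dslope (fun ζ => Complex.exp (Complex.I * w * ζ)) z with hgdef
  -- distance bound
  have hdist : ∀ ζ : ℂ, T ≤ ‖ζ‖ → T / 2 ≤ ‖ζ - z‖ := by
    intro ζ hζ
    have h1 := norm_sub_norm_le ζ z
    linarith
  -- differentiability of g
  have hh : Differentiable ℂ (fun ζ : ℂ => Complex.exp (Complex.I * w * ζ)) :=
    ((differentiable_const _).mul differentiable_id).cexp
  have hg : Differentiable ℂ g := by
    rw [← differentiableOn_univ] at *
    exact (Complex.differentiableOn_dslope (Filter.univ_mem)).2 hh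
  -- decomposition f = g + c • p away from z
  have hdecomp : ∀ ζ : ℂ, ζ ≠ z → f ζ = g ζ + c * (ζ - z)⁻¹ := by
    intro ζ hne
    have h0 : ζ - z ≠ 0 := sub_ne_zero.2 hne
    simp only [hf, hgdef, hc, dslope_of_ne _ hne, slope_def_field]
    field_simp
    ring
  -- rectangle theorem for g
  have hgRect : (∫ x : ℝ in -T..T, g x) - (∫ x : ℝ in -T..T, g (x + T * I)) +
      I * (∫ y : ℝ in (0:ℝ)..T, g (T + y * I)) -
      I * (∫ y : ℝ in (0:ℝ)..T, g (-T + y * I)) = 0 := by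
    have := Complex.integral_boundary_rect_eq_zero_of_differentiableOn g ⟨-T, 0⟩ ⟨T, T⟩
      hg.differentiableOn
    simpa [smul_eq_mul] using this
  -- slit plane memberships
  have keyB : ∀ x : ℝ, ((x : ℂ) - z) ∈ Complex.slitPlane := by
    intro x
    rw [Complex.mem_slitPlane_iff]; right; simpa using hz.ne'
  have keyT : ∀ x : ℝ, ((x : ℂ) + T * I - z) ∈ Complex.slitPlane := by
    intro x
    rw [Complex.mem_slitPlane_iff]; right
    simp only [Complex.sub_im, Complex.add_im, Complex.ofReal_im, Complex.mul_im,
      Complex.ofReal_re, Complex.I_im, Complex.I_re, mul_zero, mul_one, zero_add]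
    intro hcon
    rw [sub_eq_zero] at hcon
    rw [← hcon] at himT
    linarith
  have keyR : ∀ y : ℝ, ((T : ℂ) + y * I - z) ∈ Complex.slitPlane := by
    intro y
    rw [Complex.mem_slitPlane_iff]; left
    simp only [Complex.sub_re, Complex.add_re, Complex.ofReal_re, Complex.mul_re,
      Complex.ofReal_im, Complex.I_re, Complex.I_im, mul_zero, mul_one, zero_mul, sub_zero,
      zero_sub, neg_zero, add_zero]
    linarith
  have keyL : ∀ y : ℝ, (z + (T:ℂ) - y * I) ∈ Complex.slitPlane := by
    intro y
    rw [Complex.mem_slitPlane_iff]; left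
    simp only [Complex.sub_re, Complex.add_re, Complex.ofReal_re, Complex.mul_re,
      Complex.ofReal_im, Complex.I_re, Complex.I_im, mul_zero, mul_one, zero_mul, sub_zero,
      zero_sub, neg_zero, add_zero]
    linarith
  -- continuity of edge inverse integrands
  have hcB : IntervalIntegrable (fun x : ℝ => ((x : ℂ) - z)⁻¹) MeasureTheory.volume (-T) T := by
    apply ContinuousOn.intervalIntegrable
    exact ContinuousOn.inv₀ (by fun_prop) (fun x _ => Complex.slitPlane_ne_zero (keyB x))
  have hcT : IntervalIntegrable (fun x : ℝ => ((x : ℂ) + T * I - z)⁻¹)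
      MeasureTheory.volume (-T) T := by
    apply ContinuousOn.intervalIntegrable
    exact ContinuousOn.inv₀ (by fun_prop) (fun x _ => Complex.slitPlane_ne_zero (keyT x))
  have hcR : IntervalIntegrable (fun y : ℝ => ((T : ℂ) + y * I - z)⁻¹)
      MeasureTheory.volume 0 T := by
    apply ContinuousOn.intervalIntegrable
    exact ContinuousOn.inv₀ (by fun_prop) (fun y _ => Complex.slitPlane_ne_zero (keyR y))
  have hcL : IntervalIntegrable (fun y : ℝ => (-(T:ℂ) + y * I - z)⁻¹)
      MeasureTheory.volume 0 T := by
    apply ContinuousOn.intervalIntegrable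
    apply ContinuousOn.inv₀ (by fun_prop)
    intro y _
    rw [show -(T:ℂ) + y * I - z = -(z + (T:ℂ) - y * I) by ring, neg_ne_zero]
    exact Complex.slitPlane_ne_zero (keyL y)
  -- four explicit integrals of the pole part
  have hIB : (∫ x : ℝ in -T..T, ((x : ℂ) - z)⁻¹) =
      Complex.log (T - z) - Complex.log (-T - z) := by
    have h := intervalIntegral.integral_eq_sub_of_hasDerivAt
      (f := fun x : ℝ => Complex.log ((x : ℂ) - z))
      (f' := fun x : ℝ => ((x : ℂ) - z)⁻¹) (a := -T) (b := T)
      (fun x _ => by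
        have h1 : HasDerivAt (fun ζ : ℂ => Complex.log (ζ - z)) (((x:ℂ) - z)⁻¹ * 1) (x : ℂ) :=
          HasDerivAt.comp (x : ℂ) (Complex.hasDerivAt_log (keyB x))
            ((hasDerivAt_id _).sub_const z)
        simpa using h1.comp_ofReal) hcB
    simpa using h
  have hIT : (∫ x : ℝ in -T..T, ((x : ℂ) + T * I - z)⁻¹) =
      Complex.log ((T:ℂ) + T * I - z) - Complex.log (-(T:ℂ) + T * I - z) := by
    have h := intervalIntegral.integral_eq_sub_of_hasDerivAt
      (f := fun x : ℝ => Complex.log ((x : ℂ) + T * I - z))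
      (f' := fun x : ℝ => ((x : ℂ) + T * I - z)⁻¹) (a := -T) (b := T)
      (fun x _ => by
        have hu : HasDerivAt (fun ζ : ℂ => ζ + (T:ℂ) * I - z) 1 (x : ℂ) :=
          ((hasDerivAt_id ((x:ℂ))).add_const ((T:ℂ) * I)).sub_const z
        have h1 := HasDerivAt.comp (x : ℂ) (Complex.hasDerivAt_log (keyT x)) hu
        simpa using h1.comp_ofReal) hcT
    rw [h]
    push_cast
    ring_nf
  have hIR : (∫ y : ℝ in (0:ℝ)..T, ((T : ℂ) + y * I - z)⁻¹) =
      -I * (Complex.log ((T:ℂ) + T * I - z) - Complex.log ((T:ℂ) - z)) := by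
    have hd : ∀ y : ℝ, HasDerivAt (fun s : ℝ => -I * Complex.log ((T : ℂ) + s * I - z))
        (((T : ℂ) + y * I - z)⁻¹) y := by
      intro y
      have hu : HasDerivAt (fun ζ : ℂ => (T : ℂ) + ζ * I - z) (1 * I) (y : ℂ) :=
        (((hasDerivAt_id (y:ℂ)).mul_const I).const_add ((T:ℂ))).sub_const z
      have h1 := (HasDerivAt.comp (y : ℂ) (Complex.hasDerivAt_log (keyR y)) hu).const_mul (-I)
      have h2 := h1.comp_ofReal
      convert h2 using 1
      · rfl
      have hne : ((T : ℂ) + y * I - z) ≠ 0 := Complex.slitPlane_ne_zero (keyR y)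
      field_simp
      simp
    have h := intervalIntegral.integral_eq_sub_of_hasDerivAt (a := (0:ℝ)) (b := T)
      (fun y _ => hd y) hcR
    rw [h]
    simp
    ring
  have hIL : (∫ y : ℝ in (0:ℝ)..T, (-(T:ℂ) + y * I - z)⁻¹) =
      -I * (Complex.log (z + T - T * I) - Complex.log (z + T)) := by
    have hd : ∀ y : ℝ, HasDerivAt (fun s : ℝ => -I * Complex.log (z + (T:ℂ) - s * I))
        ((-(T:ℂ) + y * I - z)⁻¹) y := by
      intro y
      have hu : HasDerivAt (fun ζ : ℂ => z + (T:ℂ) - ζ * I) (-(1 * I)) (y : ℂ) := by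
        have := ((hasDerivAt_id (y:ℂ)).mul_const I).neg.const_add (z + (T:ℂ))
        exact this.congr_of_eventuallyEq (Filter.Eventually.of_forall fun x => by simp [sub_eq_add_neg])
      have h1 := (HasDerivAt.comp (y : ℂ) (Complex.hasDerivAt_log (keyL y)) hu).const_mul (-I)
      have h2 := h1.comp_ofReal
      convert h2 using 1
      · rfl
      have hne : (z + (T:ℂ) - y * I) ≠ 0 := Complex.slitPlane_ne_zero (keyL y)
      rw [show -(T:ℂ) + y * I - z = -(z + (T:ℂ) - y * I) by ring, inv_neg]
      field_simp
      simp
    have h := intervalIntegral.integral_eq_sub_of_hasDerivAt (a := (0:ℝ)) (b := T)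
      (fun y _ => hd y) hcL
    rw [h]
    simp
    ring
  -- the boundary integral of the pole part equals 2πi
  have hBp : ((∫ x : ℝ in -T..T, ((x : ℂ) - z)⁻¹)
      - (∫ x : ℝ in -T..T, ((x : ℂ) + T * I - z)⁻¹))
      + I * (∫ y : ℝ in (0:ℝ)..T, ((T : ℂ) + y * I - z)⁻¹)
      - I * (∫ y : ℝ in (0:ℝ)..T, (-(T:ℂ) + y * I - z)⁻¹)
      = 2 * Real.pi * I := by
    rw [hIB, hIT, hIR, hIL]
    have e1 : Complex.log (-(T:ℂ) - z) = Complex.log (z + T) - Real.pi * I := by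
      rw [show -(T:ℂ) - z = -(z + T) by ring]
      exact log_neg_of_im_pos' (by simpa using hz)
    have e2 : Complex.log (-(T:ℂ) + T * I - z) = Complex.log (z + T - T * I) + Real.pi * I := by
      rw [show -(T:ℂ) + T * I - z = -(z + T - T * I) by ring]
      apply log_neg_of_im_neg'
      simp only [Complex.sub_im, Complex.add_im, Complex.ofReal_im, Complex.mul_im,
        Complex.ofReal_re, Complex.I_im, Complex.I_re, mul_zero, mul_one, zero_add, add_zero]
      linarith
    rw [e1, e2]
    linear_combination (Complex.log ((T:ℂ) - z) - Complex.log (z + (T:ℂ))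
      - Complex.log ((T:ℂ) + T * I - z) + Complex.log (z + (T:ℂ) - T * I)) * Complex.I_sq
  -- edge decompositions of the integral of f
  have hgcont : Continuous g := hg.continuous
  have hgB : IntervalIntegrable (fun x : ℝ => g x) MeasureTheory.volume (-T) T :=
    (hgcont.comp Complex.continuous_ofReal).intervalIntegrable _ _
  have hgT : IntervalIntegrable (fun x : ℝ => g (x + T * I)) MeasureTheory.volume (-T) T :=
    (hgcont.comp (by fun_prop)).intervalIntegrable _ _
  have hgR : IntervalIntegrable (fun y : ℝ => g (T + y * I)) MeasureTheory.volume 0 T :=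
    (hgcont.comp (by fun_prop)).intervalIntegrable _ _
  have hgL : IntervalIntegrable (fun y : ℝ => g (-T + y * I)) MeasureTheory.volume 0 T :=
    (hgcont.comp (by fun_prop)).intervalIntegrable _ _
  have hEB : (∫ x : ℝ in -T..T, f x) = (∫ x : ℝ in -T..T, g x)
      + c * (∫ x : ℝ in -T..T, ((x:ℂ) - z)⁻¹) := by
    rw [← intervalIntegral.integral_const_mul, ← intervalIntegral.integral_add hgB
      (hcB.const_mul c)]
    apply intervalIntegral.integral_congr
    intro x _
    apply hdecomp
    intro hEq
    have h' := congrArg Complex.im hEq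
    simp only [Complex.ofReal_im] at h'
    rw [← h'] at hz
    exact lt_irrefl _ hz
  have hET : (∫ x : ℝ in -T..T, f (x + T * I)) = (∫ x : ℝ in -T..T, g (x + T * I))
      + c * (∫ x : ℝ in -T..T, ((x:ℂ) + T * I - z)⁻¹) := by
    rw [← intervalIntegral.integral_const_mul, ← intervalIntegral.integral_add hgT
      (hcT.const_mul c)]
    apply intervalIntegral.integral_congr
    intro x _
    apply hdecomp
    intro hEq
    have h' := congrArg Complex.im hEq
    simp only [Complex.add_im, Complex.ofReal_im, Complex.mul_im, Complex.ofReal_re,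
      Complex.I_im, Complex.I_re, mul_zero, mul_one, zero_add, zero_mul, add_zero] at h'
    rw [← h'] at himT
    exact lt_irrefl _ himT
  have hER : (∫ y : ℝ in (0:ℝ)..T, f (T + y * I)) = (∫ y : ℝ in (0:ℝ)..T, g (T + y * I))
      + c * (∫ y : ℝ in (0:ℝ)..T, ((T:ℂ) + y * I - z)⁻¹) := by
    rw [← intervalIntegral.integral_const_mul, ← intervalIntegral.integral_add hgR
      (hcR.const_mul c)]
    apply intervalIntegral.integral_congr
    intro y _
    apply hdecomp
    intro hEq
    have h' := congrArg Complex.re hEq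
    simp only [Complex.add_re, Complex.ofReal_re, Complex.mul_re, Complex.ofReal_im,
      Complex.I_re, Complex.I_im, mul_zero, mul_one, zero_mul, sub_zero, zero_sub,
      neg_zero, add_zero] at h'
    rw [← h'] at hreT
    exact lt_irrefl _ hreT
  have hEL : (∫ y : ℝ in (0:ℝ)..T, f (-T + y * I)) = (∫ y : ℝ in (0:ℝ)..T, g (-T + y * I))
      + c * (∫ y : ℝ in (0:ℝ)..T, (-(T:ℂ) + y * I - z)⁻¹) := by
    rw [← intervalIntegral.integral_const_mul, ← intervalIntegral.integral_add hgL
      (hcL.const_mul c)]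
    apply intervalIntegral.integral_congr
    intro y _
    apply hdecomp
    intro hEq
    have h' := congrArg Complex.re hEq
    simp only [Complex.add_re, Complex.neg_re, Complex.ofReal_re, Complex.mul_re,
      Complex.ofReal_im, Complex.I_re, Complex.I_im, mul_zero, mul_one, zero_mul, sub_zero,
      zero_sub, neg_zero, add_zero] at h'
    rw [← h'] at hreT'
    exact lt_irrefl _ hreT'
  -- the key contour identity
  have key : (∫ x : ℝ in -T..T, f x) - 2 * Real.pi * I * c
      = (∫ x : ℝ in -T..T, f (x + T * I)) - I * (∫ y : ℝ in (0:ℝ)..T, f (T + y * I))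
        + I * (∫ y : ℝ in (0:ℝ)..T, f (-T + y * I)) := by
    linear_combination hEB - hET + I * hER - I * hEL + hgRect + c * hBp
  -- exponential integral
  have hIexp : (∫ y : ℝ in (0:ℝ)..T, Real.exp (-(w*y))) = (1 - Real.exp (-(w*T)))/w := by
    have h := intervalIntegral.integral_eq_sub_of_hasDerivAt (a := (0:ℝ)) (b := T)
      (f := fun s : ℝ => -(Real.exp (-(w*s))/w)) (f' := fun s : ℝ => Real.exp (-(w*s)))
      (fun y _ => by
        have h1 : HasDerivAt (fun s : ℝ => -(w*s)) (-w) y := by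
          simpa [Pi.neg_def] using ((hasDerivAt_id y).const_mul w).neg
        have h2 := (h1.exp.div_const w).neg
        convert h2 using 1
        · rfl
        field_simp)
      ((by fun_prop : Continuous fun s : ℝ => Real.exp (-(w*s))).intervalIntegrable _ _)
    rw [h]
    field_simp
    rw [mul_zero, neg_zero, Real.exp_zero]
    ring
  have hE1 : Real.exp (-(w*T)) ≤ 1 := by
    rw [Real.exp_le_one_iff]
    nlinarith
  -- norm bounds on the three edges
  have hnorm : ∀ ζ : ℂ, T ≤ ‖ζ‖ →
      ‖f ζ‖ ≤ Real.exp ((Complex.I * w * ζ).re) * (2/T) := by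
    intro ζ hζ
    have hd := hdist ζ hζ
    have h2 : (0:ℝ) < T/2 := by linarith
    calc ‖f ζ‖ = Real.exp ((Complex.I * w * ζ).re) / ‖ζ - z‖ := by
          simp [hf, map_div₀, Complex.norm_exp]
      _ ≤ Real.exp ((Complex.I * w * ζ).re) / (T/2) := by
          gcongr
      _ = Real.exp ((Complex.I * w * ζ).re) * (2/T) := by
          rw [div_eq_mul_inv]
          congr 1
          rw [eq_div_iff (ne_of_gt hT0)]
          field_simp
  have htopB : ‖∫ x : ℝ in -T..T, f (x + T * I)‖ ≤ 4 * Real.exp (-(w*T)) := by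
    have hb := intervalIntegral.norm_integral_le_of_norm_le_const
      (C := Real.exp (-(w*T)) * (2/T)) (f := fun x : ℝ => f (x + T * I)) (a := -T) (b := T)
      (fun x _ => by
        have h1 := hnorm ((x:ℂ) + T * I) (by
          have := Complex.abs_im_le_norm ((x:ℂ) + T * I)
          simp only [Complex.add_im, Complex.ofReal_im, Complex.mul_im, Complex.ofReal_re,
            Complex.I_im, Complex.I_re, mul_zero, mul_one, zero_add, zero_mul,
            add_zero] at this
          calc T ≤ |T| := le_abs_self T
            _ ≤ _ := this)
        have hre1 : (Complex.I * w * ((x:ℂ) + T * I)).re = -(w*T) := by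
          simp [Complex.mul_re, Complex.mul_im, Complex.add_re, Complex.add_im]
        rwa [hre1] at h1)
    have habs2 : |T - (-T)| = 2*T := by rw [abs_of_pos] <;> linarith
    rw [habs2] at hb
    calc ‖∫ x : ℝ in -T..T, f (x + T * I)‖ ≤ Real.exp (-(w*T)) * (2/T) * (2*T) := hb
      _ = 4 * Real.exp (-(w*T)) := by field_simp; ring
  have hside : ∀ s : ℝ, s = T ∨ s = -T →
      ‖∫ y : ℝ in (0:ℝ)..T, f (s + y * I)‖ ≤ (2/T) * ((1 - Real.exp (-(w*T)))/w) := by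
    intro s hs
    have hb := intervalIntegral.norm_integral_le_of_norm_le
      (f := fun y : ℝ => f (s + y * I)) (g := fun y : ℝ => (2/T) * Real.exp (-(w*y)))
      (a := (0:ℝ)) (b := T) (μ := MeasureTheory.volume) hT0.le
      (MeasureTheory.ae_of_all _ (fun y _ => by
        have h1 := hnorm ((s:ℂ) + y * I) (by
          have := Complex.abs_re_le_norm ((s:ℂ) + y * I)
          simp only [Complex.add_re, Complex.ofReal_re, Complex.mul_re, Complex.ofReal_im,
            Complex.I_re, Complex.I_im, mul_zero, mul_one, zero_mul, sub_zero, zero_sub,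
            neg_zero, add_zero] at this
          have habs3 : |s| = T := by
            rcases hs with h | h <;> rw [h] <;> simp [abs_of_pos hT0]
          calc T = |s| := habs3.symm
            _ ≤ _ := this)
        have hre1 : (Complex.I * w * ((s:ℂ) + y * I)).re = -(w*y) := by
          simp [Complex.mul_re, Complex.mul_im, Complex.add_re, Complex.add_im]
        rw [hre1] at h1
        calc ‖f ((s:ℂ) + y * I)‖ ≤ Real.exp (-(w*y)) * (2/T) := h1
          _ = (2/T) * Real.exp (-(w*y)) := by ring))
      (((by fun_prop : Continuous fun y : ℝ => (2/T) * Real.exp (-(w*y)))).intervalIntegrable _ _)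
    rw [intervalIntegral.integral_const_mul, hIexp] at hb
    calc ‖∫ y : ℝ in (0:ℝ)..T, f (s + y * I)‖ ≤ |2/T * ((1 - Real.exp (-(w*T)))/w)| := hb.trans (le_abs_self _)
      _ = (2/T) * ((1 - Real.exp (-(w*T)))/w) := by
          rw [_root_.abs_of_nonneg]
          apply mul_nonneg (by positivity)
          apply div_nonneg (by linarith) hw.le
  -- final assembly
  have hgoalInt : (∫ t : ℝ in -T..T, Complex.exp (Complex.I * w * t) / (t - z))
      = ∫ x : ℝ in -T..T, f x := rfl
  have h1 := htopB
  have h2 := hside T (Or.inl rfl)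
  have h3 := hside (-T) (Or.inr rfl)
  simp only [Complex.ofReal_neg] at h3
  set E := Real.exp (-(w*T)) with hE
  set Dt := ∫ x : ℝ in -T..T, f (x + T * I) with hDt
  set Dr := ∫ y : ℝ in (0:ℝ)..T, f (T + y * I) with hDr
  set Dl := ∫ y : ℝ in (0:ℝ)..T, f (-T + y * I) with hDl
  have h2pi : ((2:ℂ) * (Real.pi:ℝ) * I) ≠ 0 := by
    simp [Real.pi_ne_zero, Complex.I_ne_zero, Complex.ofReal_ne_zero]
  have hsplit : (1 / ((2:ℂ) * (Real.pi:ℝ) * I)) * (∫ x : ℝ in -T..T, f x) - c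
      = (1 / ((2:ℂ) * (Real.pi:ℝ) * I)) * (Dt - I * Dr + I * Dl) := by
    rw [← key]
    field_simp
  have hnormcoef : ‖(1 / ((2:ℂ) * (Real.pi:ℝ) * I))‖ = 1 / (2 * Real.pi) := by
    simp [map_div₀, map_mul,
      abs_of_pos Real.pi_pos]
  rw [hgoalInt, hsplit]
  calc ‖(1 / ((2:ℂ) * (Real.pi:ℝ) * I)) * (Dt - I * Dr + I * Dl)‖
      = (1 / (2 * Real.pi)) * ‖Dt - I * Dr + I * Dl‖ := by rw [norm_mul, hnormcoef]
    _ ≤ (1 / (2 * Real.pi)) * (‖Dt‖ + ‖Dr‖ + ‖Dl‖) := by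
        apply mul_le_mul_of_nonneg_left _ (by positivity)
        calc ‖Dt - I * Dr + I * Dl‖ ≤ ‖Dt - I * Dr‖ + ‖I * Dl‖ := norm_add_le _ _
          _ ≤ (‖Dt‖ + ‖I * Dr‖) + ‖I * Dl‖ := by
              exact add_le_add_left (norm_sub_le _ _) _
          _ = ‖Dt‖ + ‖Dr‖ + ‖Dl‖ := by
              simp [norm_mul]
    _ ≤ (1 / (2 * Real.pi)) * (4 * E + (2/T) * ((1 - E)/w) + (2/T) * ((1 - E)/w)) := by
        apply mul_le_mul_of_nonneg_left _ (by positivity)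
        linarith
    _ = 2 / Real.pi * ((1 - E) / (w * T) + E) := by
        have hπ := Real.pi_pos
        field_simp
        ring
end

section
/- For z ∈ ℂ with Im z > 0, T > 0 and w ∈ ℝ, define F_{z,T}(w) = (1/(2πi)) ∫_{−T}^{T} e^{iwt}/(t − z) dt. Then for every w < 0 and every T with 0 < 2|z| < T, |F_{z,T}(w)| ≤ (2/π) [ (1 − e^{−|w|T})/(|w|T) + e^{−|w|T} ]. -/
open scoped BigOperators

open Complex MeasureTheory Set intervalIntegral
open scoped Interval

/-- For `w < 0` and `0 < 2|z| < T`, with `F_{z,T}(w) = (1/2πi)∫_{−T}^{T} e^{iwt}/(t−z) dt`: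
`|F_{z,T}(w)| ≤ (2/π)[(1 − e^{−|w|T})/(|w|T) + e^{−|w|T}]`. -/
theorem F_bound_neg (z : ℂ) (hz : 0 < z.im) (T w : ℝ) (hw : w < 0)
    (hT : 2 * ‖z‖ < T) :
    ‖(1 / (2 * Real.pi * Complex.I)) *
        ∫ t in (-T)..T, Complex.exp (Complex.I * w * t) / (t - z)‖ ≤
    2 / Real.pi * ((1 - Real.exp (-(|w| * T))) / (|w| * T) + Real.exp (-(|w| * T))) := by
  have habs : ‖z‖ < T / 2 := by linarith
  have hT0 : (0 : ℝ) < T := lt_of_le_of_lt (by positivity) hT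
  have hw' : |w| = -w := abs_of_neg hw
  have hw0 : (0 : ℝ) < |w| := abs_pos.mpr (ne_of_lt hw)
  have hpi : (0 : ℝ) < Real.pi := Real.pi_pos
  set f : ℂ → ℂ := fun ζ => Complex.exp (Complex.I * w * ζ) / (ζ - z) with hfdef
  have hdiff : DifferentiableOn ℂ f
      ([[((⟨-T, -T⟩ : ℂ)).re, ((⟨T, 0⟩ : ℂ)).re]] ×ℂ
        [[((⟨-T, -T⟩ : ℂ)).im, ((⟨T, 0⟩ : ℂ)).im]]) := by
    intro ζ hζ
    have him : ζ.im ∈ [[(-T : ℝ), 0]] := hζ.2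
    rw [Set.uIcc_of_le (by linarith : (-T : ℝ) ≤ 0)] at him
    have hne : ζ - z ≠ 0 := by
      rw [sub_ne_zero]
      intro h
      have h1 : ζ.im = z.im := by rw [h]
      linarith [him.2]
    have h1 : DifferentiableAt ℂ (fun ζ : ℂ => Complex.exp (Complex.I * w * ζ)) ζ :=
      (Complex.differentiable_exp.comp ((differentiable_const _).mul differentiable_id)) ζ
    have h2 : DifferentiableAt ℂ (fun ζ : ℂ => ζ - z) ζ :=
      (differentiable_id.sub (differentiable_const z)) ζ
    exact (h1.div h2 hne).differentiableWithinAt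
  have hrect := Complex.integral_boundary_rect_eq_zero_of_differentiableOn f
      ⟨-T, -T⟩ ⟨T, 0⟩ hdiff
  simp only [smul_eq_mul, Complex.ofReal_zero, zero_mul, add_zero, Complex.ofReal_neg] at hrect
  -- identify the target integral
  have hid : (∫ t in (-T)..T, Complex.exp (Complex.I * w * t) / (t - z)) =
      ∫ x : ℝ in (-T)..T, f x := rfl
  have key : (∫ t in (-T)..T, Complex.exp (Complex.I * w * t) / (t - z)) =
      (∫ x : ℝ in (-T)..T, f (x + -(T : ℂ) * Complex.I))
      + Complex.I * (∫ y : ℝ in (-T)..0, f (T + y * Complex.I))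
      - Complex.I * (∫ y : ℝ in (-T)..0, f (-(T : ℂ) + y * Complex.I)) := by
    rw [hid]; linear_combination -hrect
  -- bottom bound
  have hbottom : ‖∫ x : ℝ in (-T)..T, f (x + -(T : ℂ) * Complex.I)‖ ≤
      2 * Real.exp (-(|w| * T)) := by
    have hb : ∀ x ∈ Ι (-T) T, ‖f (x + -(T : ℂ) * Complex.I)‖ ≤ Real.exp (-(|w| * T)) / T := by
      intro x _
      have hnum : ‖Complex.exp (Complex.I * w * (x + -(T : ℂ) * Complex.I))‖ =
          Real.exp (-(|w| * T)) := by
        rw [Complex.norm_exp]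
        congr 1
        have : (Complex.I * w * (x + -(T : ℂ) * Complex.I)).re = w * T := by
          simp [Complex.mul_re, Complex.mul_im]
        rw [this, hw']; ring
      have hden : T ≤ ‖x + -(T : ℂ) * Complex.I - z‖ := by
        have h1 : |(x + -(T : ℂ) * Complex.I - z).im| ≤
            ‖x + -(T : ℂ) * Complex.I - z‖ := Complex.abs_im_le_norm _
        have h2 : (x + -(T : ℂ) * Complex.I - z).im = -T - z.im := by simp
        rw [h2] at h1
        have : |(-T - z.im : ℝ)| = T + z.im := by
          rw [abs_of_nonpos (by linarith)]; ring
        rw [this] at h1; linarith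
      rw [hfdef]
      simp only [norm_div]
      rw [hnum]
      apply div_le_div_of_nonneg_left (Real.exp_pos _).le hT0 hden |>.trans_eq rfl
    calc ‖∫ x : ℝ in (-T)..T, f (x + -(T : ℂ) * Complex.I)‖
        ≤ Real.exp (-(|w| * T)) / T * |T - (-T)| :=
          intervalIntegral.norm_integral_le_of_norm_le_const hb
      _ = 2 * Real.exp (-(|w| * T)) := by
          rw [abs_of_pos (by linarith : (0:ℝ) < T - (-T))]
          field_simp; ring
  -- side bounds
  have hside : ∀ c : ℝ, |c| = T → ‖∫ y : ℝ in (-T)..0, f ((c : ℂ) + y * Complex.I)‖ ≤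
      2 * ((1 - Real.exp (-(|w| * T))) / (|w| * T)) := by
    intro c hc
    have hgint : IntervalIntegrable (fun y : ℝ => Real.exp (|w| * y) / (T / 2))
        MeasureTheory.volume (-T) 0 :=
      (Real.continuous_exp.comp (continuous_const.mul continuous_id)).div_const _
        |>.intervalIntegrable _ _
    have hb : ∀ y : ℝ, ‖f ((c : ℂ) + y * Complex.I)‖ ≤ Real.exp (|w| * y) / (T / 2) := by
      intro y
      have hnum : ‖Complex.exp (Complex.I * w * ((c : ℂ) + y * Complex.I))‖ =
          Real.exp (|w| * y) := by
        rw [Complex.norm_exp]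
        congr 1
        have : (Complex.I * w * ((c : ℂ) + y * Complex.I)).re = -(w * y) := by
          simp [Complex.mul_re, Complex.mul_im]
        rw [this, hw']; ring
      have hden : T / 2 ≤ ‖(c : ℂ) + y * Complex.I - z‖ := by
        have h1 : |((c : ℂ) + y * Complex.I - z).re| ≤
            ‖(c : ℂ) + y * Complex.I - z‖ := Complex.abs_re_le_norm _
        have h2 : ((c : ℂ) + y * Complex.I - z).re = c - z.re := by simp
        rw [h2] at h1
        have h3 : |z.re| ≤ ‖z‖ := Complex.abs_re_le_norm z
        have h4 : T - |z.re| ≤ |c - z.re| := by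
          have := abs_sub_abs_le_abs_sub c z.re
          rw [hc] at this; linarith
        linarith [abs_nonneg (c - z.re)]
      rw [hfdef]
      simp only [norm_div]
      rw [hnum]
      exact div_le_div_of_nonneg_left (Real.exp_pos _).le (by linarith) hden
    have h5 : ‖∫ y : ℝ in (-T)..0, f ((c : ℂ) + y * Complex.I)‖ ≤
        |∫ y : ℝ in (-T)..0, Real.exp (|w| * y) / (T / 2)| :=
      intervalIntegral.norm_integral_le_abs_of_norm_le
        (Filter.Eventually.of_forall fun y => hb y) hgint
    have h6 : (∫ y : ℝ in (-T)..0, Real.exp (|w| * y) / (T / 2)) =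
        2 * ((1 - Real.exp (-(|w| * T))) / (|w| * T)) := by
      rw [intervalIntegral.integral_div]
      have h7 : (∫ y : ℝ in (-T)..0, Real.exp (|w| * y)) =
          (1 - Real.exp (-(|w| * T))) / |w| := by
        have h8 := intervalIntegral.integral_comp_mul_right (a := -T) (b := 0)
          (c := |w|) (fun x => Real.exp x) (ne_of_gt hw0)
        rw [zero_mul, integral_exp, Real.exp_zero, smul_eq_mul] at h8
        have h9 : (∫ y : ℝ in (-T)..0, Real.exp (|w| * y)) =
            ∫ y : ℝ in (-T)..0, Real.exp (y * |w|) := by simp_rw [mul_comm]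
        rw [h9, h8]
        have h10 : -T * |w| = -(|w| * T) := by ring
        rw [h10, inv_mul_eq_div]
      rw [h7]
      field_simp
    rw [h6] at h5
    calc ‖∫ y : ℝ in (-T)..0, f ((c : ℂ) + y * Complex.I)‖
        ≤ |2 * ((1 - Real.exp (-(|w| * T))) / (|w| * T))| := h5
      _ = 2 * ((1 - Real.exp (-(|w| * T))) / (|w| * T)) := by
          rw [_root_.abs_of_nonneg]
          have hE1 : Real.exp (-(|w| * T)) ≤ 1 :=
            Real.exp_le_one_iff.mpr (by nlinarith)
          have : (0:ℝ) < |w| * T := by positivity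
          exact mul_nonneg (by norm_num) (div_nonneg (by linarith) this.le)
  have hE1 : Real.exp (-(|w| * T)) ≤ 1 := Real.exp_le_one_iff.mpr (by nlinarith)
  have hA0 : 0 ≤ (1 - Real.exp (-(|w| * T))) / (|w| * T) :=
    div_nonneg (by linarith) (by positivity)
  have hE0 : (0:ℝ) < Real.exp (-(|w| * T)) := Real.exp_pos _
  have hnorm : ‖∫ t in (-T)..T, Complex.exp (Complex.I * w * t) / (t - z)‖ ≤
      2 * Real.exp (-(|w| * T)) + 4 * ((1 - Real.exp (-(|w| * T))) / (|w| * T)) := by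
    rw [key]
    have h1 := hside T (abs_of_pos hT0)
    have h2 := hside (-T) (by rw [abs_neg, abs_of_pos hT0])
    have h2' : ‖Complex.I * ∫ y : ℝ in (-T)..0, f (-(T : ℂ) + y * Complex.I)‖ ≤
        2 * ((1 - Real.exp (-(|w| * T))) / (|w| * T)) := by
      rw [norm_mul, Complex.norm_I, one_mul]
      have : ((-T : ℝ) : ℂ) = -(T : ℂ) := by push_cast; ring
      rw [← this]; exact h2
    have h1' : ‖Complex.I * ∫ y : ℝ in (-T)..0, f ((T : ℂ) + y * Complex.I)‖ ≤
        2 * ((1 - Real.exp (-(|w| * T))) / (|w| * T)) := by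
      rw [norm_mul, Complex.norm_I, one_mul]; exact h1
    calc ‖(∫ x : ℝ in (-T)..T, f (x + -(T : ℂ) * Complex.I))
        + Complex.I * (∫ y : ℝ in (-T)..0, f (T + y * Complex.I))
        - Complex.I * (∫ y : ℝ in (-T)..0, f (-(T : ℂ) + y * Complex.I))‖
        ≤ ‖(∫ x : ℝ in (-T)..T, f (x + -(T : ℂ) * Complex.I))
            + Complex.I * (∫ y : ℝ in (-T)..0, f (T + y * Complex.I))‖
          + ‖Complex.I * (∫ y : ℝ in (-T)..0, f (-(T : ℂ) + y * Complex.I))‖ :=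
          norm_sub_le _ _
      _ ≤ ‖(∫ x : ℝ in (-T)..T, f (x + -(T : ℂ) * Complex.I))‖
          + ‖Complex.I * (∫ y : ℝ in (-T)..0, f (T + y * Complex.I))‖
          + ‖Complex.I * (∫ y : ℝ in (-T)..0, f (-(T : ℂ) + y * Complex.I))‖ := by
          gcongr; exact norm_add_le _ _
      _ ≤ 2 * Real.exp (-(|w| * T)) + 4 * ((1 - Real.exp (-(|w| * T))) / (|w| * T)) := by
          linarith [hbottom, h1', h2']
  have hcoef : ‖(1 / (2 * (Real.pi : ℂ) * Complex.I))‖ = 1 / (2 * Real.pi) := by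
    simp [norm_div, abs_of_pos hpi]
  rw [norm_mul, hcoef]
  have := hnorm
  rw [div_mul_eq_mul_div, one_mul]
  rw [div_le_iff₀ (by linarith : (0:ℝ) < 2 * Real.pi)]
  have hgoal : 2 / Real.pi * ((1 - Real.exp (-(|w| * T))) / (|w| * T) + Real.exp (-(|w| * T)))
      * (2 * Real.pi) = 4 * ((1 - Real.exp (-(|w| * T))) / (|w| * T))
      + 4 * Real.exp (-(|w| * T)) := by
    field_simp
    ring
  rw [hgoal]
  linarith
end

section
/- Let (V,d) be a finite metric space, λ > 0, K ≥ 0, and let ε : V × V → [0,∞) satisfy Σ_{y∈V} e^{λ d(x,y)} ε(x,y) ≤ K for every x ∈ V. Suppose C : V × [0,∞) → [0,∞) is bounded, continuous in its second variable, and satisfies the integral inequality C(x,t) ≤ C(x,0) + 2 ∫_0^t Σ_{y∈V} ε(x,y) C(y,s) ds for all x ∈ V and t ≥ 0. Then for all x ∈ V and t ≥ 0, C(x,t) ≤ e^{2tK} C(x,0) + Σ_{y∈V, y≠x} e^{−λ d(x,y)} (e^{2tK} − 1) C(y,0). -/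
open scoped BigOperators
open MeasureTheory intervalIntegral Set

open scoped Classical in
/-- Gronwall-type iteration lemma: if `C` is a bounded nonnegative function, continuous in
its second variable, satisfying
`C(x,t) ≤ C(x,0) + 2∫_0^t ∑_y ε(x,y) C(y,s) ds`, with `∑_y e^{λ d(x,y)} ε(x,y) ≤ K`, then
`C(x,t) ≤ e^{2tK} C(x,0) + ∑_{y ≠ x} e^{−λ d(x,y)} (e^{2tK} − 1) C(y,0)`. -/
theorem gronwall_iteration
    {V : Type} [Fintype V] [MetricSpace V]
    (lam K : ℝ) (hlam : 0 < lam) (hK : 0 ≤ K)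
    (ε : V → V → ℝ) (hε0 : ∀ x y : V, 0 ≤ ε x y)
    (hεK : ∀ x : V, ∑ y : V, Real.exp (lam * dist x y) * ε x y ≤ K)
    (C : V → ℝ → ℝ)
    (hC0 : ∀ (x : V) (t : ℝ), 0 ≤ t → 0 ≤ C x t)
    (hCbdd : ∃ M : ℝ, ∀ (x : V) (t : ℝ), 0 ≤ t → C x t ≤ M)
    (hCcont : ∀ x : V, ContinuousOn (C x) (Set.Ici 0))
    (hCineq : ∀ (x : V) (t : ℝ), 0 ≤ t →
      C x t ≤ C x 0 + 2 * ∫ s in (0 : ℝ)..t, ∑ y : V, ε x y * C y s)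
    (x : V) (t : ℝ) (ht : 0 ≤ t) :
    C x t ≤ Real.exp (2 * t * K) * C x 0 +
      ∑ y ∈ Finset.univ.filter (fun y : V => y ≠ x),
        Real.exp (-(lam * dist x y)) * ((Real.exp (2 * t * K) - 1) * C y 0) := by
  classical
  set w : V → ℝ := fun y => Real.exp (-(lam * dist x y)) with hw
  have hw0 : ∀ y, 0 < w y := fun y => Real.exp_pos _
  have hw1 : ∀ y, w y ≤ 1 := by
    intro y
    show Real.exp (-(lam * dist x y)) ≤ 1
    exact Real.exp_le_one_iff.2 (neg_nonpos.2 (by positivity))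
  have hwx : w x = 1 := by simp [hw]
  have hne : (Finset.univ : Finset V).Nonempty := ⟨x, Finset.mem_univ x⟩
  set H : ℝ → ℝ := fun s => Finset.univ.sup' hne (fun y => w y * C y s) with hH
  have hle : ∀ (y : V) (s : ℝ), w y * C y s ≤ H s := fun y s =>
    Finset.le_sup' (fun y => w y * C y s) (Finset.mem_univ y)
  have hH0 : ∀ s : ℝ, 0 ≤ s → 0 ≤ H s := fun s hs =>
    le_trans (mul_nonneg (hw0 x).le (hC0 x s hs)) (hle x s)
  have hHcont : ContinuousOn H (Set.Ici 0) := by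
    show ContinuousOn (fun s => Finset.univ.sup' hne fun y => w y * C y s) (Set.Ici 0)
    apply ContinuousOn.finset_sup'_apply hne
    intro y _
    exact continuousOn_const.mul (hCcont y)
  -- key bound
  have hkey : ∀ (z : V) (s : ℝ), 0 ≤ s → w z * (∑ y : V, ε z y * C y s) ≤ K * H s := by
    intro z s hs
    rw [Finset.mul_sum]
    calc ∑ y : V, w z * (ε z y * C y s)
        ≤ ∑ y : V, (Real.exp (lam * dist z y) * ε z y) * H s := by
          apply Finset.sum_le_sum
          intro y _
          have htri : lam * dist x y ≤ lam * dist x z + lam * dist z y := by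
            rw [← mul_add]
            exact mul_le_mul_of_nonneg_left (dist_triangle x z y) hlam.le
          have h1 : w z * C y s ≤ Real.exp (lam * dist z y) * (w y * C y s) := by
            rw [← mul_assoc]
            apply mul_le_mul_of_nonneg_right _ (hC0 y s hs)
            rw [hw, ← Real.exp_add]
            apply Real.exp_le_exp.2
            linarith
          calc w z * (ε z y * C y s) = ε z y * (w z * C y s) := by ring
            _ ≤ ε z y * (Real.exp (lam * dist z y) * (w y * C y s)) :=
                mul_le_mul_of_nonneg_left h1 (hε0 z y)
            _ ≤ ε z y * (Real.exp (lam * dist z y) * H s) := by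
                apply mul_le_mul_of_nonneg_left _ (hε0 z y)
                exact mul_le_mul_of_nonneg_left (hle y s) (Real.exp_pos _).le
            _ = (Real.exp (lam * dist z y) * ε z y) * H s := by ring
      _ = (∑ y : V, Real.exp (lam * dist z y) * ε z y) * H s := by rw [Finset.sum_mul]
      _ ≤ K * H s := mul_le_mul_of_nonneg_right (hεK z) (hH0 s hs)
  -- integrability facts
  have hsumcont : ∀ z : V, ContinuousOn (fun s => ∑ y : V, ε z y * C y s) (Set.Ici 0) := by
    intro z
    apply continuousOn_finset_sum
    intro y _
    exact continuousOn_const.mul (hCcont y)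
  have hsumInt : ∀ (z : V) (u : ℝ), 0 ≤ u →
      IntervalIntegrable (fun s => ∑ y : V, ε z y * C y s) volume 0 u := by
    intro z u hu
    apply ContinuousOn.intervalIntegrable
    apply (hsumcont z).mono
    rw [Set.uIcc_of_le hu]
    exact Set.Icc_subset_Ici_self
  have hHInt : ∀ u : ℝ, 0 ≤ u → IntervalIntegrable H volume 0 u := by
    intro u hu
    apply ContinuousOn.intervalIntegrable
    apply hHcont.mono
    rw [Set.uIcc_of_le hu]
    exact Set.Icc_subset_Ici_self
  set φ : ℝ → ℝ := fun u => ∫ s in (0:ℝ)..u, H s with hφ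
  have hφ0 : φ 0 = 0 := by simp [hφ]
  have hφnn : ∀ u : ℝ, 0 ≤ u → 0 ≤ φ u := by
    intro u hu
    apply intervalIntegral.integral_nonneg hu
    intro s hs
    exact hH0 s hs.1
  have hφcont : ContinuousOn φ (Set.Icc 0 t) := by
    have := intervalIntegral.continuousOn_primitive_interval (a := (0:ℝ)) (b := t)
      (f := H) (μ := volume) ?_
    · rwa [Set.uIcc_of_le ht] at this
    · rw [Set.uIcc_of_le ht]
      exact ((hHcont.mono Set.Icc_subset_Ici_self).integrableOn_compact isCompact_Icc)
  have hφderiv : ∀ s ∈ Set.Ico 0 t, HasDerivWithinAt φ (H s) (Set.Ici s) s := by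
    intro s hs
    apply intervalIntegral.integral_hasDerivWithinAt_right (hHInt s hs.1)
    · exact (hHcont.mono (Set.Ioi_subset_Ici_self.trans (Set.Ici_subset_Ici.2
        hs.1))).stronglyMeasurableAtFilter_nhdsWithin measurableSet_Ioi s
    · exact (hHcont s hs.1).mono (Set.Ioi_subset_Ici_self.trans (Set.Ici_subset_Ici.2 hs.1))
  -- integral inequality for H
  have hHb : ∀ u ∈ Set.Icc 0 t, H u ≤ H 0 + 2 * K * φ u := by
    intro u hu
    apply Finset.sup'_le
    intro z _
    have h1 := hCineq z u hu.1
    have h2 : w z * C z u ≤ w z * C z 0 +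
        2 * ∫ s in (0:ℝ)..u, w z * ∑ y : V, ε z y * C y s := by
      rw [intervalIntegral.integral_const_mul]
      calc w z * C z u ≤ w z * (C z 0 + 2 * ∫ s in (0:ℝ)..u, ∑ y : V, ε z y * C y s) :=
            mul_le_mul_of_nonneg_left h1 (hw0 z).le
        _ = w z * C z 0 + 2 * (w z * ∫ s in (0:ℝ)..u, ∑ y : V, ε z y * C y s) := by ring
    have h3 : (∫ s in (0:ℝ)..u, w z * ∑ y : V, ε z y * C y s) ≤ ∫ s in (0:ℝ)..u, K * H s := by
      apply intervalIntegral.integral_mono_on hu.1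
        ((hsumInt z u hu.1).const_mul _) ((hHInt u hu.1).const_mul _)
      intro s hs
      exact hkey z s hs.1
    have h4 : (∫ s in (0:ℝ)..u, K * H s) = K * φ u := by
      rw [hφ, intervalIntegral.integral_const_mul]
    calc w z * C z u ≤ w z * C z 0 + 2 * (K * φ u) := by
          refine h2.trans ?_
          have := h3.trans_eq h4
          linarith
      _ ≤ H 0 + 2 * K * φ u := by
          have := hle z 0
          linarith
  -- Gronwall
  have hgron : ∀ u ∈ Set.Icc 0 t, ‖φ u‖ ≤ gronwallBound 0 (2*K) (H 0) (u - 0) := by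
    apply norm_le_gronwallBound_of_norm_deriv_right_le hφcont hφderiv
    · simp [hφ0]
    · intro s hs
      rw [Real.norm_of_nonneg (hH0 s hs.1), Real.norm_of_nonneg (hφnn s hs.1)]
      have := hHb s ⟨hs.1, hs.2.le⟩
      linarith
  have hφt : φ t ≤ gronwallBound 0 (2*K) (H 0) t := by
    have := hgron t ⟨ht, le_rfl⟩
    rwa [Real.norm_of_nonneg (hφnn t ht), sub_zero] at this
  have hgb : 2 * K * gronwallBound 0 (2*K) (H 0) t = H 0 * (Real.exp (2 * t * K) - 1) := by
    by_cases hK0 : K = 0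
    · simp [hK0, gronwallBound_K0]
    · have h2K : (2*K) ≠ 0 := by positivity
      rw [gronwallBound_of_K_ne_0 h2K]
      have he : Real.exp (2 * K * t) = Real.exp (2 * t * K) := by ring_nf
      simp only [zero_mul, zero_add]
      rw [he]
      field_simp
  -- final chain
  have hKφ : 2 * K * φ t ≤ H 0 * (Real.exp (2 * t * K) - 1) := by
    rw [← hgb]
    have : 0 ≤ 2 * K := by positivity
    nlinarith [hφt]
  have hfinal : C x t ≤ C x 0 + H 0 * (Real.exp (2 * t * K) - 1) := by
    have h1 := hCineq x t ht
    have h3 : (∫ s in (0:ℝ)..t, ∑ y : V, ε x y * C y s) ≤ ∫ s in (0:ℝ)..t, K * H s := by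
      apply intervalIntegral.integral_mono_on ht (hsumInt x t ht) ((hHInt t ht).const_mul _)
      intro s hs
      have := hkey x s hs.1
      rwa [hwx, one_mul] at this
    have h4 : (∫ s in (0:ℝ)..t, K * H s) = K * φ t := by
      rw [hφ, intervalIntegral.integral_const_mul]
    have := h3.trans_eq h4
    linarith
  -- bound H 0 by the sum
  have hH0le : H 0 ≤ C x 0 + ∑ y ∈ Finset.univ.filter (fun y : V => y ≠ x), w y * C y 0 := by
    apply Finset.sup'_le
    intro z _
    have hsum : ∑ y : V, w y * C y 0 =
        (∑ y ∈ Finset.univ.filter (fun y : V => y ≠ x), w y * C y 0) + w x * C x 0 := by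
      rw [← Finset.sum_filter_add_sum_filter_not Finset.univ (fun y : V => y ≠ x)
        (fun y => w y * C y 0)]
      congr 1
      have hfx : Finset.univ.filter (fun y : V => ¬ y ≠ x) = {x} := by
        ext y; simp
      rw [hfx, Finset.sum_singleton]
    have hz : w z * C z 0 ≤ ∑ y : V, w y * C y 0 := by
      apply Finset.single_le_sum (f := fun y => w y * C y 0) _ (Finset.mem_univ z)
      intro y _
      exact mul_nonneg (hw0 y).le (hC0 y 0 le_rfl)
    rw [hsum, hwx, one_mul] at hz
    linarith
  have hexp1 : (1:ℝ) ≤ Real.exp (2 * t * K) := by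
    rw [← Real.exp_zero]
    apply Real.exp_le_exp.2
    positivity
  calc C x t ≤ C x 0 + H 0 * (Real.exp (2 * t * K) - 1) := hfinal
    _ ≤ C x 0 + (C x 0 + ∑ y ∈ Finset.univ.filter (fun y : V => y ≠ x), w y * C y 0) *
          (Real.exp (2 * t * K) - 1) := by
        apply add_le_add (le_refl _)
        apply mul_le_mul_of_nonneg_right hH0le
        linarith
    _ = Real.exp (2 * t * K) * C x 0 +
        ∑ y ∈ Finset.univ.filter (fun y : V => y ≠ x),
          w y * ((Real.exp (2 * t * K) - 1) * C y 0) := by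
        have hrhs : ∑ y ∈ Finset.univ.filter (fun y : V => y ≠ x),
            w y * ((Real.exp (2 * t * K) - 1) * C y 0)
            = (∑ y ∈ Finset.univ.filter (fun y : V => y ≠ x), w y * C y 0) *
              (Real.exp (2 * t * K) - 1) := by
          rw [Finset.sum_mul]
          exact Finset.sum_congr rfl fun y _ => by ring
        rw [hrhs]
        ring
    _ = _ := rfl
end

section
/- Fix λ > 0 and let Φ be an interaction with ‖Φ‖_λ < ∞. Then for every X ⊆ V, every A ∈ A_X, every B ∈ A_V, and every t ∈ ℝ, one has ‖[τ_t(A), B]‖ ≤ N^{2|X|} ‖A‖ Σ_{x∈X} C_B(x,t). -/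
noncomputable section LiebRobinson

open scoped BigOperators

/-- The Hilbert space of the whole system: `⊗_{x ∈ V} ℂ^{n x}`, realized concretely as
`ℓ²`-functions on the configuration space `∀ x, Fin (n x)`. -/
abbrev LRSpace {V : Type} [Fintype V] [DecidableEq V] (n : V → ℕ) :=
  EuclideanSpace ℂ (∀ x : V, Fin (n x))

/-- Bounded operators on the total Hilbert space. -/
abbrev LROp {V : Type} [Fintype V] [DecidableEq V] (n : V → ℕ) :=
  LRSpace n →L[ℂ] LRSpace n

/-- The matrix entry of an operator between configuration basis vectors. -/
def LREntry {V : Type} [Fintype V] [DecidableEq V] {n : V → ℕ}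
    (A : LROp n) (f g : ∀ x : V, Fin (n x)) : ℂ :=
  inner ℂ (EuclideanSpace.single f (1 : ℂ)) (A (EuclideanSpace.single g (1 : ℂ)))

open scoped Classical in
/-- `A` belongs to the local algebra `𝒜_X`: it acts as `M ⊗ 1` for some matrix `M`
supported on the sites in `X`. -/
def SupportedOn {V : Type} [Fintype V] [DecidableEq V] {n : V → ℕ}
    (X : Set V) (A : LROp n) : Prop :=
  ∃ M : (∀ x : X, Fin (n x)) → (∀ x : X, Fin (n x)) → ℂ,
    ∀ f g : ∀ x : V, Fin (n x),
      LREntry A f g =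
        M (fun x => f x.1) (fun x => g x.1) *
          (if ∀ y, y ∉ X → f y = g y then 1 else 0)

/-- An interaction: an assignment of a self-adjoint observable `Φ(X) ∈ 𝒜_X` to every
subset `X ⊆ V`. -/
structure Interaction (V : Type) [Fintype V] [DecidableEq V] (n : V → ℕ) where
  Φ : Set V → LROp n
  supported : ∀ X : Set V, SupportedOn X (Φ X)
  selfAdjoint : ∀ X : Set V, IsSelfAdjoint (Φ X)

/-- The Hamiltonian `H = ∑_{X ⊆ V} Φ(X)`. -/
def Interaction.ham {V : Type} [Fintype V] [DecidableEq V] {n : V → ℕ}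
    (Φ : Interaction V n) : LROp n :=
  ∑ X : Set V, Φ.Φ X

/-- The Heisenberg dynamics `τ_t(A) = e^{itH} A e^{-itH}`. -/
def Interaction.evol {V : Type} [Fintype V] [DecidableEq V] {n : V → ℕ}
    (Φ : Interaction V n) (t : ℝ) (A : LROp n) : LROp n :=
  NormedSpace.exp ((Complex.I * t) • Φ.ham) * A *
    NormedSpace.exp ((-(Complex.I * t)) • Φ.ham)

/-- The imaginary-time evolved observable `τ_{ib}(B) = e^{-bH} B e^{bH}`. -/
def Interaction.imEvol {V : Type} [Fintype V] [DecidableEq V] {n : V → ℕ}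
    (Φ : Interaction V n) (b : ℝ) (B : LROp n) : LROp n :=
  NormedSpace.exp ((-b : ℂ) • Φ.ham) * B * NormedSpace.exp ((b : ℂ) • Φ.ham)

open scoped Classical in
/-- The interaction norm `‖Φ‖_λ = max_x ∑_{X ∋ x} |X| ‖Φ(X)‖ N^{2|X|} e^{λ D(X)}`. -/
def intNorm {V : Type} [Fintype V] [DecidableEq V] [MetricSpace V] {n : V → ℕ}
    (lam : ℝ) (N : ℕ) (Φ : Interaction V n) : ℝ :=
  ⨆ x : V, ∑ X ∈ Finset.univ.filter (fun X : Set V => x ∈ X),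
    (X.ncard : ℝ) * ‖Φ.Φ X‖ * (N : ℝ) ^ (2 * X.ncard) * Real.exp (lam * Metric.diam X)

/-- `C_B(x,t) = sup { ‖[τ_t(A),B]‖ / ‖A‖ : 0 ≠ A ∈ 𝒜_x }`. -/
def CB {V : Type} [Fintype V] [DecidableEq V] [MetricSpace V] {n : V → ℕ}
    (Φ : Interaction V n) (B : LROp n) (x : V) (t : ℝ) : ℝ :=
  ⨆ A : {A : LROp n // SupportedOn {x} A ∧ A ≠ 0},
    ‖Φ.evol t A.1 * B - B * Φ.evol t A.1‖ / ‖A.1‖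

end LiebRobinson

noncomputable section Aux
open scoped Classical

variable {V : Type} [Fintype V] [DecidableEq V] {n : V → ℕ}

abbrev Cfg (n : V → ℕ) := ∀ x : V, Fin (n x)

def ent (A : LROp n) (f g : Cfg n) : ℂ := A (EuclideanSpace.single g 1) f

lemma LREntry_eq_ent (A : LROp n) (f g : Cfg n) : LREntry A f g = ent A f g := by
  simp [LREntry, ent, EuclideanSpace.inner_single_left]

lemma vec_decomp (v : LRSpace n) : v = ∑ g, (v g) • EuclideanSpace.single g (1:ℂ) := by
  ext j
  rw [WithLp.ofLp_sum, Finset.sum_apply]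
  simp [EuclideanSpace.single_apply]

lemma apply_eq (A : LROp n) (v : LRSpace n) (f : Cfg n) :
    A v f = ∑ g, ent A f g * v g := by
  conv_lhs => rw [vec_decomp v]
  rw [map_sum, WithLp.ofLp_sum, Finset.sum_apply]
  refine Finset.sum_congr rfl fun g _ => ?_
  rw [map_smul]
  show v g * (A (EuclideanSpace.single g 1)) f = _
  rw [ent, mul_comm]

lemma ext_ent {A A' : LROp n} (h : ∀ f g, ent A f g = ent A' f g) : A = A' := by
  refine ContinuousLinearMap.ext fun v => ?_
  ext f
  rw [apply_eq, apply_eq]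
  exact Finset.sum_congr rfl fun g _ => by rw [h]

lemma ent_mul (P Q : LROp n) (f g : Cfg n) :
    ent (P * Q) f g = ∑ h, ent P f h * ent Q h g := by
  show (P (Q (EuclideanSpace.single g 1))) f = _
  rw [apply_eq]
  rfl

lemma ent_sum {α : Type*} (s : Finset α) (A : α → LROp n) (f g : Cfg n) :
    ent (∑ i ∈ s, A i) f g = ∑ i ∈ s, ent (A i) f g := by
  simp only [ent, ContinuousLinearMap.sum_apply]
  rw [WithLp.ofLp_sum, Finset.sum_apply]

lemma ent_smul (c : ℂ) (A : LROp n) (f g : Cfg n) : ent (c • A) f g = c * ent A f g := rfl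

lemma ent_one (f g : Cfg n) : ent (1 : LROp n) f g = if f = g then 1 else 0 := by
  show (EuclideanSpace.single g (1:ℂ)) f = _
  simp [EuclideanSpace.single_apply]

end Aux
noncomputable section Aux2
open scoped Classical

variable {V : Type} [Fintype V] [DecidableEq V] {n : V → ℕ}

/-- The single-site matrix unit `|a⟩⟨b|` at site `x`, tensored with identity elsewhere. -/
def mulUnit (x : V) (a b : Fin (n x)) : LROp n :=
  LinearMap.toContinuousLinearMap
    { toFun := fun v => WithLp.toLp 2 (fun f => if f x = a then v (Function.update f x b) else 0 : Cfg n → ℂ)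
      map_add' := by
        intro v w; ext f
        show _ = (if f x = a then v _ else 0) + (if f x = a then w _ else 0)
        by_cases h : f x = a <;> simp [h]
      map_smul' := by
        intro c v; ext f
        show _ = c * (if f x = a then v _ else 0)
        by_cases h : f x = a <;> simp [h] }

lemma mulUnit_apply (x : V) (a b : Fin (n x)) (v : LRSpace n) (f : Cfg n) :
    mulUnit x a b v f = if f x = a then v (Function.update f x b) else 0 := rfl

lemma ent_mulUnit (x : V) (a b : Fin (n x)) (f g : Cfg n) :
    ent (mulUnit x a b) f g = if f x = a ∧ Function.update f x b = g then 1 else 0 := by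
  show (if f x = a then (EuclideanSpace.single g (1:ℂ)) (Function.update f x b) else 0) = _
  simp only [EuclideanSpace.single_apply, ite_and]

lemma norm_sq_eq (v : LRSpace n) : ‖v‖ ^ 2 = ∑ f, ‖v f‖ ^ 2 := by
  rw [EuclideanSpace.norm_eq, Real.sq_sqrt]
  positivity

lemma norm_le_of_sq_le {v : LRSpace n} {r : ℝ} (hr : 0 ≤ r) (h : ∑ f, ‖v f‖ ^ 2 ≤ r ^ 2) :
    ‖v‖ ≤ r := by
  rw [← norm_sq_eq] at h
  nlinarith [norm_nonneg v]

lemma sum_update_fiber (x : V) (c d : Fin (n x)) (F : Cfg n → ℝ) :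
    ∑ f ∈ Finset.univ.filter (fun f : Cfg n => f x = c), F (Function.update f x d)
      = ∑ g ∈ Finset.univ.filter (fun g : Cfg n => g x = d), F g := by
  refine Finset.sum_nbij' (fun f => Function.update f x d) (fun g => Function.update g x c)
    ?_ ?_ ?_ ?_ ?_
  · intro f hf; simp
  · intro g hg; simp
  · intro f hf
    simp only [Finset.mem_filter] at hf
    show Function.update (Function.update f x d) x c = f
    rw [Function.update_idem, ← hf.2, Function.update_eq_self]
  · intro g hg
    simp only [Finset.mem_filter] at hg
    show Function.update (Function.update g x c) x d = g
    rw [Function.update_idem, ← hg.2, Function.update_eq_self]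
  · intro f hf; rfl

lemma norm_mulUnit_le (x : V) (a b : Fin (n x)) : ‖(mulUnit x a b : LROp n)‖ ≤ 1 := by
  refine ContinuousLinearMap.opNorm_le_bound _ zero_le_one fun v => ?_
  rw [one_mul]
  refine norm_le_of_sq_le (norm_nonneg v) ?_
  have h1 : ∀ f : Cfg n, ‖mulUnit x a b v f‖ ^ 2
      = if f x = a then ‖v (Function.update f x b)‖ ^ 2 else 0 := by
    intro f; rw [mulUnit_apply]; split <;> simp
  calc ∑ f, ‖mulUnit x a b v f‖ ^ 2
      = ∑ f ∈ Finset.univ.filter (fun f : Cfg n => f x = a),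
          ‖v (Function.update f x b)‖ ^ 2 := by
        rw [Finset.sum_filter]; exact Finset.sum_congr rfl fun f _ => h1 f
    _ = ∑ g ∈ Finset.univ.filter (fun g : Cfg n => g x = b), ‖v g‖ ^ 2 :=
        sum_update_fiber x a b (fun g => ‖v g‖ ^ 2)
    _ ≤ ∑ g, ‖v g‖ ^ 2 := by
        refine Finset.sum_le_sum_of_subset_of_nonneg (Finset.filter_subset _ _)
          fun g _ _ => by positivity
    _ = ‖v‖ ^ 2 := (norm_sq_eq v).symm

end Aux2
noncomputable section Aux3
open scoped Classical

variable {V : Type} [Fintype V] [DecidableEq V] {n : V → ℕ}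

lemma update_comm_iff (x : V) (b c : Fin (n x)) (h g : Cfg n) :
    (h x = b ∧ Function.update h x c = g) ↔ (g x = c ∧ h = Function.update g x b) := by
  constructor
  · rintro ⟨h1, rfl⟩
    refine ⟨Function.update_self _ _ _, ?_⟩
    rw [Function.update_idem, ← h1, Function.update_eq_self]
  · rintro ⟨h1, rfl⟩
    refine ⟨Function.update_self _ _ _, ?_⟩
    rw [Function.update_idem, ← h1, Function.update_eq_self]

lemma ent_mulUnit_mul (x : V) (a b : Fin (n x)) (Q : LROp n) (f g : Cfg n) :
    ent (mulUnit x a b * Q) f g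
      = if f x = a then ent Q (Function.update f x b) g else 0 := by
  rw [ent_mul]
  simp only [ent_mulUnit]
  by_cases hfa : f x = a
  · simp [hfa, ite_mul, Finset.sum_ite_eq]
  · simp [hfa]

lemma ent_mul_mulUnit (x : V) (b c : Fin (n x)) (Q : LROp n) (f g : Cfg n) :
    ent (Q * mulUnit x b c) f g
      = if g x = c then ent Q f (Function.update g x b) else 0 := by
  rw [ent_mul]
  simp only [ent_mulUnit]
  rw [Finset.sum_congr rfl (fun h _ => by rw [if_congr (update_comm_iff x b c h g) rfl rfl])]
  by_cases hg : g x = c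
  · simp [hg, mul_ite, Finset.sum_ite_eq']
  · simp [hg]

/-- The `(a,b)` component of `A` at site `x`:  `1_x ⊗ A_{ab}`. -/
def siteComp (x : V) (a b : Fin (n x)) (A : LROp n) : LROp n :=
  ∑ c : Fin (n x), mulUnit x c a * A * mulUnit x b c

lemma ent_siteComp (x : V) (a b : Fin (n x)) (A : LROp n) (f g : Cfg n) :
    ent (siteComp x a b A) f g
      = if f x = g x then ent A (Function.update f x a) (Function.update g x b) else 0 := by
  rw [siteComp, ent_sum]
  have h1 : ∀ c : Fin (n x), ent (mulUnit x c a * A * mulUnit x b c) f g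
      = if f x = c then (if g x = c
          then ent A (Function.update f x a) (Function.update g x b) else 0) else 0 := by
    intro c
    rw [mul_assoc, ent_mulUnit_mul]
    by_cases hf : f x = c
    · simp only [hf, if_true]
      rw [ent_mul_mulUnit]
    · simp [hf]
  rw [Finset.sum_congr rfl (fun c _ => h1 c), Finset.sum_ite_eq]
  simp only [Finset.mem_univ, if_true]
  exact if_congr eq_comm rfl rfl

lemma siteComp_apply (x : V) (a b : Fin (n x)) (A : LROp n) (v : LRSpace n) (f : Cfg n) :
    siteComp x a b A v f = A (mulUnit x b (f x) v) (Function.update f x a) := by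
  show (∑ c : Fin (n x), mulUnit x c a * A * mulUnit x b c) v f = _
  rw [ContinuousLinearMap.sum_apply, WithLp.ofLp_sum, Finset.sum_apply]
  have h1 : ∀ c : Fin (n x), (mulUnit x c a * A * mulUnit x b c) v f
      = if f x = c then A (mulUnit x b c v) (Function.update f x a) else 0 := by
    intro c
    show mulUnit x c a (A (mulUnit x b c v)) f = _
    rw [mulUnit_apply]
  rw [Finset.sum_congr rfl (fun c _ => h1 c), Finset.sum_ite_eq]
  simp

lemma norm_siteComp_le (x : V) (a b : Fin (n x)) (A : LROp n) :
    ‖siteComp x a b A‖ ≤ ‖A‖ := by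
  refine ContinuousLinearMap.opNorm_le_bound _ (norm_nonneg A) fun v => ?_
  refine norm_le_of_sq_le (by positivity) ?_
  have h2 : ∑ c : Fin (n x), ‖mulUnit x b c v‖ ^ 2 = ‖v‖ ^ 2 := by
    have h3 : ∀ c : Fin (n x), ‖mulUnit x b c v‖ ^ 2
        = ∑ g ∈ Finset.univ.filter (fun g : Cfg n => g x = c), ‖v g‖ ^ 2 := by
      intro c
      rw [norm_sq_eq, ← sum_update_fiber x b c (fun g => ‖v g‖ ^ 2)]
      rw [Finset.sum_filter]
      refine Finset.sum_congr rfl fun f _ => ?_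
      rw [mulUnit_apply]
      split <;> simp
    rw [Finset.sum_congr rfl (fun c _ => h3 c), Finset.sum_fiberwise, norm_sq_eq]
  have key : ∑ f, ‖siteComp x a b A v f‖ ^ 2
      ≤ ‖A‖ ^ 2 * ∑ c : Fin (n x), ‖mulUnit x b c v‖ ^ 2 := by
    rw [← Finset.sum_fiberwise Finset.univ (fun f : Cfg n => f x)
      (fun f => ‖siteComp x a b A v f‖ ^ 2), Finset.mul_sum]
    refine Finset.sum_le_sum fun c _ => ?_
    have h4 : ∑ f ∈ Finset.univ.filter (fun f : Cfg n => f x = c),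
        ‖siteComp x a b A v f‖ ^ 2
        = ∑ f ∈ Finset.univ.filter (fun f : Cfg n => f x = c),
            ‖A (mulUnit x b c v) (Function.update f x a)‖ ^ 2 := by
      refine Finset.sum_congr rfl fun f hf => ?_
      simp only [Finset.mem_filter] at hf
      rw [siteComp_apply, hf.2]
    rw [h4, sum_update_fiber x c a (fun h => ‖A (mulUnit x b c v) h‖ ^ 2)]
    calc ∑ h ∈ Finset.univ.filter (fun h : Cfg n => h x = a),
          ‖A (mulUnit x b c v) h‖ ^ 2
        ≤ ∑ h, ‖A (mulUnit x b c v) h‖ ^ 2 :=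
          Finset.sum_le_sum_of_subset_of_nonneg (Finset.filter_subset _ _)
            fun h _ _ => by positivity
      _ = ‖A (mulUnit x b c v)‖ ^ 2 := (norm_sq_eq _).symm
      _ ≤ (‖A‖ * ‖mulUnit x b c v‖) ^ 2 := by
          have := A.le_opNorm (mulUnit x b c v)
          nlinarith [norm_nonneg (A (mulUnit x b c v)), norm_nonneg (mulUnit x b c v)]
      _ = ‖A‖ ^ 2 * ‖mulUnit x b c v‖ ^ 2 := by ring
  rw [h2] at key
  calc ∑ f, ‖siteComp x a b A v f‖ ^ 2 ≤ ‖A‖ ^ 2 * ‖v‖ ^ 2 := key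
    _ = (‖A‖ * ‖v‖) ^ 2 := by ring

/-- Recombination: `A = ∑_{a,b} U_{ab} ⊗ A_{ab}`. -/
lemma recomb (x : V) (A : LROp n) :
    A = ∑ p : Fin (n x) × Fin (n x), mulUnit x p.1 p.2 * siteComp x p.1 p.2 A := by
  refine ext_ent fun f g => ?_
  rw [ent_sum, Finset.sum_congr rfl (fun p _ => by
    rw [ent_mulUnit_mul, if_congr (Iff.rfl) (ent_siteComp x p.1 p.2 A _ g) rfl])]
  rw [Fintype.sum_prod_type]
  have h2 : ∀ a b : Fin (n x),
      (if f x = a then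
        if Function.update f x b x = g x then
          ent A (Function.update (Function.update f x b) x a) (Function.update g x b)
        else 0 else 0)
      = if f x = a then
          (if b = g x then ent A (Function.update f x a) (Function.update g x b) else 0)
        else 0 := by
    intro a b
    rw [Function.update_self, Function.update_idem]
  rw [Finset.sum_congr rfl fun a _ => Finset.sum_congr rfl fun b _ => h2 a b]
  have h3 : ∀ a : Fin (n x),
      (∑ b : Fin (n x), if f x = a then
          (if b = g x then ent A (Function.update f x a) (Function.update g x b) else 0)
        else 0)
      = if f x = a then ent A (Function.update f x a) (Function.update g x (g x)) else 0 := by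
    intro a
    by_cases hfa : f x = a
    · simp [hfa, Finset.sum_ite_eq']
    · simp [hfa]
  rw [Finset.sum_congr rfl fun a _ => h3 a, Finset.sum_ite_eq]
  simp [Function.update_eq_self]

end Aux3
noncomputable section Aux4
open scoped Classical

variable {V : Type} [Fintype V] [DecidableEq V] {n : V → ℕ}

lemma supportedOn_iff (X : Set V) (A : LROp n) :
    SupportedOn X A ↔
      ∃ M : (∀ x : X, Fin (n x)) → (∀ x : X, Fin (n x)) → ℂ,
        ∀ f g : Cfg n,
          ent A f g =
            M (fun x => f x.1) (fun x => g x.1) *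
              (if ∀ y, y ∉ X → f y = g y then 1 else 0) := by
  unfold SupportedOn
  simp only [LREntry_eq_ent]

lemma supported_mulUnit (x : V) (a b : Fin (n x)) :
    SupportedOn {x} (mulUnit x a b : LROp n) := by
  rw [supportedOn_iff]
  refine ⟨fun φ ψ => if φ ⟨x, Set.mem_singleton x⟩ = a ∧ ψ ⟨x, Set.mem_singleton x⟩ = b
    then 1 else 0, fun f g => ?_⟩
  rw [ent_mulUnit]
  have : (Function.update f x b = g) ↔ (g x = b ∧ ∀ y, y ∉ ({x} : Set V) → f y = g y) := by
    rw [Function.update_eq_iff]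
    simp [eq_comm, Set.mem_singleton_iff]
  rw [if_congr (and_congr Iff.rfl this) rfl rfl]
  by_cases h1 : f x = a <;> by_cases h2 : g x = b <;>
    by_cases h3 : ∀ y, y ∉ ({x} : Set V) → f y = g y <;>
    simp [h1, h2, h3]

def liftCfg {x : V} {Y : Set V} (a : Fin (n x)) (φ : ∀ z : Y, Fin (n z)) :
    ∀ z : (insert x Y : Set V), Fin (n z) :=
  fun z =>
    if h : (z : V) ∈ Y then φ ⟨z, h⟩
    else Fin.cast (congrArg n ((Set.mem_insert_iff.mp z.2).resolve_right h)).symm a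

lemma restrict_update (x : V) (Y : Set V) (hx : x ∉ Y) (f : Cfg n) (a : Fin (n x)) :
    (fun z : (insert x Y : Set V) => Function.update f x a z.1)
      = liftCfg a (fun z : Y => f z.1) := by
  funext z
  by_cases h : (z : V) ∈ Y
  · have hzx : (z : V) ≠ x := fun he => hx (he ▸ h)
    rw [liftCfg]
    rw [dif_pos h, Function.update_of_ne hzx]
  · have hzx : (z : V) = x := (Set.mem_insert_iff.mp z.2).resolve_right h
    rw [liftCfg, dif_neg h]
    refine Fin.ext ?_
    rw [Fin.coe_cast]
    obtain ⟨zv, hz⟩ := z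
    dsimp only at *
    subst hzx
    rw [Function.update_self]

lemma supported_siteComp {Y : Set V} {x : V} (hx : x ∉ Y) {A : LROp n}
    (hA : SupportedOn (insert x Y) A) (a b : Fin (n x)) :
    SupportedOn Y (siteComp x a b A) := by
  rw [supportedOn_iff] at hA ⊢
  obtain ⟨M, hM⟩ := hA
  refine ⟨fun φ ψ => M (liftCfg a φ) (liftCfg b ψ), fun f g => ?_⟩
  rw [ent_siteComp, hM (Function.update f x a) (Function.update g x b),
    restrict_update x Y hx f a, restrict_update x Y hx g b]
  have hcond : ∀ y, y ∉ (insert x Y : Set V) →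
      (Function.update f x a y = Function.update g x b y ↔ f y = g y) := by
    intro y hy
    have hyx : y ≠ x := fun he => hy (he ▸ Set.mem_insert x Y)
    rw [Function.update_of_ne hyx, Function.update_of_ne hyx]
  have hiff : (f x = g x ∧ ∀ y, y ∉ (insert x Y : Set V) →
      Function.update f x a y = Function.update g x b y) ↔ (∀ y, y ∉ Y → f y = g y) := by
    constructor
    · rintro ⟨h1, h2⟩ y hy
      by_cases hyx : y = x
      · exact hyx ▸ h1
      · exact (hcond y (by simp [Set.mem_insert_iff, hyx, hy])).mp (h2 y (by simp [Set.mem_insert_iff, hyx, hy]))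
    · intro h
      refine ⟨h x hx, fun y hy => ?_⟩
      have hyY : y ∉ Y := fun hyy => hy (Set.mem_insert_of_mem x hyy)
      exact (hcond y hy).mpr (h y hyY)
  by_cases h1 : f x = g x
  · rw [if_pos h1]
    by_cases h3 : ∀ y, y ∉ Y → f y = g y
    · rw [if_pos ((hiff.mpr h3).2), if_pos h3]
    · rw [if_neg (fun h2 => h3 (hiff.mp ⟨h1, h2⟩)), if_neg h3]
  · rw [if_neg h1]
    have hnc : ¬ ∀ y, y ∉ Y → f y = g y := fun h3 => h1 (hiff.mpr h3).1
    rw [if_neg hnc, mul_zero]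

lemma supported_empty_eq {A : LROp n} (hA : SupportedOn (∅ : Set V) A) :
    ∃ c : ℂ, A = c • 1 := by
  rw [supportedOn_iff] at hA
  obtain ⟨M, hM⟩ := hA
  set φ0 : ∀ z : (∅ : Set V), Fin (n z) := fun z => absurd z.2 (Set.notMem_empty z.1) with hφ0
  refine ⟨M φ0 φ0, ext_ent fun f g => ?_⟩
  have h1 : ent A f g = M φ0 φ0 * (if f = g then 1 else 0) := by
    rw [hM f g]
    have e1 : (fun z : (∅ : Set V) => f z.1) = φ0 := funext fun z => absurd z.2 (Set.notMem_empty z.1)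
    have e2 : (fun z : (∅ : Set V) => g z.1) = φ0 := funext fun z => absurd z.2 (Set.notMem_empty z.1)
    rw [e1, e2]
    congr 1
    by_cases hfg : f = g
    · rw [if_pos (fun y _ => congrFun hfg y), if_pos hfg]
    · rw [if_neg (fun h => hfg (funext fun y => h y (Set.notMem_empty y))), if_neg hfg]
  rw [h1, ent_smul, ent_one]

end Aux4
noncomputable section Aux5
open scoped Classical

variable {V : Type} [Fintype V] [DecidableEq V] {n : V → ℕ}

lemma exp_mul_exp_neg (H : LROp n) (z : ℂ) :
    NormedSpace.exp (z • H) * NormedSpace.exp ((-z) • H) = 1 := by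
  rw [← NormedSpace.exp_add_of_commute_of_mem_ball (𝕂 := ℂ) (((Commute.refl H).smul_right (-z)).smul_left z)
    ((NormedSpace.expSeries_radius_eq_top ℂ (LROp n)).symm ▸ edist_lt_top _ _)
    ((NormedSpace.expSeries_radius_eq_top ℂ (LROp n)).symm ▸ edist_lt_top _ _)]
  have h0 : z • H + (-z) • H = 0 := by module
  rw [h0, NormedSpace.exp_zero]

lemma ham_selfAdjoint (Φ : Interaction V n) : IsSelfAdjoint Φ.ham := by
  unfold Interaction.ham
  rw [IsSelfAdjoint, star_sum (R := LROp n) Finset.univ Φ.Φ]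
  exact Finset.sum_congr rfl fun X _ => (Φ.selfAdjoint X).star_eq

lemma norm_exp_le_one {H : LROp n} (hH : IsSelfAdjoint H) {z : ℂ} (hz : star z = -z) :
    ‖NormedSpace.exp (z • H)‖ ≤ 1 := by
  set u := NormedSpace.exp (z • H) with hu
  have hstar : star u = NormedSpace.exp ((-z) • H) := by
    rw [hu, NormedSpace.star_exp, star_smul, hH.star_eq, hz]
  have hmul : star u * u = 1 := by
    rw [hstar]
    have := exp_mul_exp_neg H (-z)
    rwa [neg_neg] at this
  have hsq : ‖u‖ * ‖u‖ = ‖(1 : LROp n)‖ := by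
    rw [← CStarRing.norm_star_mul_self, hmul]
  have hone : ‖(1 : LROp n)‖ ≤ 1 := by
    rw [ContinuousLinearMap.one_def]; exact ContinuousLinearMap.norm_id_le
  nlinarith [norm_nonneg u]

variable (Φ : Interaction V n) (t : ℝ)

lemma evol_inv_mul :
    NormedSpace.exp ((-(Complex.I * t)) • Φ.ham) *
      NormedSpace.exp ((Complex.I * t) • Φ.ham) = 1 := by
  have := exp_mul_exp_neg Φ.ham (-(Complex.I * t))
  rwa [neg_neg] at this

lemma evol_mul_inv :
    NormedSpace.exp ((Complex.I * t) • Φ.ham) *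
      NormedSpace.exp ((-(Complex.I * t)) • Φ.ham) = 1 :=
  exp_mul_exp_neg Φ.ham (Complex.I * t)

lemma evol_one : Φ.evol t 1 = 1 := by
  rw [Interaction.evol, mul_one, evol_mul_inv]

lemma evol_mul (P Q : LROp n) : Φ.evol t (P * Q) = Φ.evol t P * Φ.evol t Q := by
  have h1 : ∀ W : LROp n, NormedSpace.exp ((-(Complex.I * t)) • Φ.ham) *
      (NormedSpace.exp ((Complex.I * t) • Φ.ham) * W) = W := by
    intro W
    rw [← mul_assoc, evol_inv_mul, one_mul]
  simp only [Interaction.evol, mul_assoc]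
  rw [h1]

lemma evol_smul (c : ℂ) (P : LROp n) : Φ.evol t (c • P) = c • Φ.evol t P := by
  simp only [Interaction.evol, mul_smul_comm, smul_mul_assoc]

lemma evol_sum {α : Type*} (s : Finset α) (P : α → LROp n) :
    Φ.evol t (∑ i ∈ s, P i) = ∑ i ∈ s, Φ.evol t (P i) := by
  simp only [Interaction.evol, Finset.mul_sum, Finset.sum_mul]

lemma evol_zero : Φ.evol t 0 = 0 := by
  simp [Interaction.evol]

lemma norm_evol_le (P : LROp n) : ‖Φ.evol t P‖ ≤ ‖P‖ := by
  have h1 : ‖NormedSpace.exp ((Complex.I * t) • Φ.ham)‖ ≤ 1 :=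
    norm_exp_le_one (ham_selfAdjoint Φ) (by
      rw [Complex.star_def, map_mul, Complex.conj_I, Complex.conj_ofReal]; ring)
  have h2 : ‖NormedSpace.exp ((-(Complex.I * t)) • Φ.ham)‖ ≤ 1 :=
    norm_exp_le_one (ham_selfAdjoint Φ) (by
      rw [Complex.star_def, map_neg, map_mul, Complex.conj_I, Complex.conj_ofReal]; ring)
  calc ‖Φ.evol t P‖
      ≤ ‖NormedSpace.exp ((Complex.I * t) • Φ.ham) * P‖ *
          ‖NormedSpace.exp ((-(Complex.I * t)) • Φ.ham)‖ := norm_mul_le _ _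
    _ ≤ ‖NormedSpace.exp ((Complex.I * t) • Φ.ham)‖ * ‖P‖ *
          ‖NormedSpace.exp ((-(Complex.I * t)) • Φ.ham)‖ := by
        have := norm_mul_le (NormedSpace.exp ((Complex.I * t) • Φ.ham)) P
        have h3 := norm_nonneg (NormedSpace.exp ((-(Complex.I * t)) • Φ.ham))
        nlinarith
    _ ≤ ‖P‖ * ‖NormedSpace.exp ((-(Complex.I * t)) • Φ.ham)‖ := by
        refine mul_le_mul_of_nonneg_right ?_ (norm_nonneg _)
        nlinarith [norm_nonneg P]
    _ ≤ ‖P‖ * 1 := mul_le_mul_of_nonneg_left h2 (norm_nonneg P)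
    _ = ‖P‖ := mul_one _

end Aux5
noncomputable section Aux6
open scoped Classical

variable {V : Type} [Fintype V] [DecidableEq V] [MetricSpace V] {n : V → ℕ}

lemma CB_nonneg (Φ : Interaction V n) (B : LROp n) (t : ℝ) (x : V) : 0 ≤ CB Φ B x t :=
  Real.iSup_nonneg fun A => div_nonneg (norm_nonneg _) (norm_nonneg _)

lemma comm_le_CB (Φ : Interaction V n) (B : LROp n) (t : ℝ) (x : V) {U : LROp n}
    (hU : SupportedOn {x} U) :
    ‖Φ.evol t U * B - B * Φ.evol t U‖ ≤ CB Φ B x t * ‖U‖ := by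
  by_cases h0 : U = 0
  · subst h0
    rw [evol_zero, zero_mul, mul_zero, sub_zero, norm_zero]
    rw [mul_zero]
  · rw [CB]
    have hb : BddAbove (Set.range fun A : {A : LROp n // SupportedOn {x} A ∧ A ≠ 0} =>
        ‖Φ.evol t A.1 * B - B * Φ.evol t A.1‖ / ‖A.1‖) := by
      refine ⟨2 * ‖B‖, ?_⟩
      rintro r ⟨A, rfl⟩
      have hpos : 0 < ‖A.1‖ := norm_pos_iff.mpr A.2.2
      rw [div_le_iff₀ hpos]
      have h1 : ‖Φ.evol t A.1 * B - B * Φ.evol t A.1‖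
          ≤ ‖Φ.evol t A.1 * B‖ + ‖B * Φ.evol t A.1‖ := norm_sub_le _ _
      have h2 : ‖Φ.evol t A.1 * B‖ ≤ ‖Φ.evol t A.1‖ * ‖B‖ := norm_mul_le _ _
      have h3 : ‖B * Φ.evol t A.1‖ ≤ ‖B‖ * ‖Φ.evol t A.1‖ := norm_mul_le _ _
      have h4 : ‖Φ.evol t A.1‖ ≤ ‖A.1‖ := norm_evol_le Φ t A.1
      nlinarith [norm_nonneg B, norm_nonneg (Φ.evol t A.1)]
    have hle := le_ciSup hb (⟨U, hU, h0⟩ : {A : LROp n // SupportedOn {x} A ∧ A ≠ 0})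
    have hpos : 0 < ‖U‖ := norm_pos_iff.mpr h0
    rw [div_le_iff₀ hpos] at hle
    exact hle

lemma comm_expand (P Q B : LROp n) :
    P * Q * B - B * (P * Q) = P * (Q * B - B * Q) + (P * B - B * P) * Q := by
  simp only [mul_sub, sub_mul, mul_assoc]
  abel

lemma comm_smul_one (Φ : Interaction V n) (t : ℝ) (B : LROp n) (c : ℂ) :
    Φ.evol t (c • (1 : LROp n)) * B - B * Φ.evol t (c • (1 : LROp n)) = 0 := by
  rw [evol_smul, evol_one, smul_mul_assoc, mul_smul_comm, one_mul, mul_one, sub_self]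

lemma main_ind (N : ℕ) (hN1 : 1 ≤ N) (hN : ∀ x : V, n x ≤ N)
    (Φ : Interaction V n) (B : LROp n) (t : ℝ) :
    ∀ (s : Finset V) (A : LROp n), SupportedOn (↑s) A →
      ‖Φ.evol t A * B - B * Φ.evol t A‖
        ≤ (N : ℝ) ^ (2 * s.card) * ‖A‖ * ∑ x ∈ s, CB Φ B x t := by
  intro s
  induction s using Finset.induction_on with
  | empty =>
    intro A hA
    have hA' : SupportedOn (∅ : Set V) A := by simpa using hA
    obtain ⟨c, rfl⟩ := supported_empty_eq hA'
    rw [comm_smul_one, norm_zero, Finset.sum_empty, mul_zero]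
  | @insert x s hx ih =>
    intro A hA
    have hxs : x ∉ (↑s : Set V) := by simpa using hx
    have hA' : SupportedOn (insert x (↑s : Set V)) A := by
      rwa [Finset.coe_insert] at hA
    have hsum : (0:ℝ) ≤ ∑ y ∈ s, CB Φ B y t :=
      Finset.sum_nonneg fun y _ => CB_nonneg Φ B t y
    have hpow0 : (0:ℝ) ≤ (N : ℝ) ^ (2 * s.card) := by positivity
    have hpow1 : (1:ℝ) ≤ (N : ℝ) ^ (2 * s.card) :=
      one_le_pow₀ (by exact_mod_cast hN1)
    set K1 : ℝ := (N : ℝ) ^ (2 * s.card) * ‖A‖ * ∑ y ∈ s, CB Φ B y t with hK1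
    set K2 : ℝ := CB Φ B x t * ‖A‖ with hK2
    have hterm : ∀ p : Fin (n x) × Fin (n x),
        ‖Φ.evol t (mulUnit x p.1 p.2 * siteComp x p.1 p.2 A) * B
          - B * Φ.evol t (mulUnit x p.1 p.2 * siteComp x p.1 p.2 A)‖ ≤ K1 + K2 := by
      intro p
      rw [evol_mul, comm_expand]
      set P := Φ.evol t (mulUnit x p.1 p.2) with hP'
      set Q := Φ.evol t (siteComp x p.1 p.2 A) with hQ'
      have hP : ‖P‖ ≤ 1 := le_trans (norm_evol_le Φ t _) (norm_mulUnit_le x p.1 p.2)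
      have hQA : ‖siteComp x p.1 p.2 A‖ ≤ ‖A‖ := norm_siteComp_le x p.1 p.2 A
      have hQ : ‖Q‖ ≤ ‖A‖ := le_trans (norm_evol_le Φ t _) hQA
      have hcommQ : ‖Q * B - B * Q‖ ≤ K1 := by
        refine le_trans (ih (siteComp x p.1 p.2 A) (supported_siteComp hxs hA' p.1 p.2)) ?_
        exact mul_le_mul_of_nonneg_right (mul_le_mul_of_nonneg_left hQA hpow0) hsum
      have hcommP : ‖P * B - B * P‖ ≤ CB Φ B x t := by
        refine le_trans (comm_le_CB Φ B t x (supported_mulUnit x p.1 p.2)) ?_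
        calc CB Φ B x t * ‖mulUnit x p.1 p.2‖ ≤ CB Φ B x t * 1 :=
              mul_le_mul_of_nonneg_left (norm_mulUnit_le x p.1 p.2) (CB_nonneg Φ B t x)
          _ = CB Φ B x t := mul_one _
      calc ‖P * (Q * B - B * Q) + (P * B - B * P) * Q‖
          ≤ ‖P * (Q * B - B * Q)‖ + ‖(P * B - B * P) * Q‖ := norm_add_le _ _
        _ ≤ ‖P‖ * ‖Q * B - B * Q‖ + ‖P * B - B * P‖ * ‖Q‖ :=
            add_le_add (norm_mul_le _ _) (norm_mul_le _ _)
        _ ≤ 1 * K1 + CB Φ B x t * ‖A‖ := by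
            refine add_le_add ?_ ?_
            · exact mul_le_mul hP hcommQ (norm_nonneg _) zero_le_one
            · exact mul_le_mul hcommP hQ (norm_nonneg _) (CB_nonneg Φ B t x)
        _ = K1 + K2 := by rw [one_mul]
    have hexpand : Φ.evol t A * B - B * Φ.evol t A
        = ∑ p : Fin (n x) × Fin (n x),
            (Φ.evol t (mulUnit x p.1 p.2 * siteComp x p.1 p.2 A) * B
              - B * Φ.evol t (mulUnit x p.1 p.2 * siteComp x p.1 p.2 A)) := by
      conv_lhs => rw [recomb x A]
      rw [evol_sum, Finset.sum_mul, Finset.mul_sum, ← Finset.sum_sub_distrib]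
    rw [hexpand]
    have hK12 : (0:ℝ) ≤ K1 + K2 := by
      have : (0:ℝ) ≤ K1 := by positivity
      have : (0:ℝ) ≤ K2 := mul_nonneg (CB_nonneg Φ B t x) (norm_nonneg _)
      positivity
    calc ‖∑ p : Fin (n x) × Fin (n x),
            (Φ.evol t (mulUnit x p.1 p.2 * siteComp x p.1 p.2 A) * B
              - B * Φ.evol t (mulUnit x p.1 p.2 * siteComp x p.1 p.2 A))‖
        ≤ ∑ p : Fin (n x) × Fin (n x),
            ‖Φ.evol t (mulUnit x p.1 p.2 * siteComp x p.1 p.2 A) * B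
              - B * Φ.evol t (mulUnit x p.1 p.2 * siteComp x p.1 p.2 A)‖ :=
          norm_sum_le _ _
      _ ≤ (Finset.univ : Finset (Fin (n x) × Fin (n x))).card • (K1 + K2) :=
          Finset.sum_le_card_nsmul _ _ _ fun p _ => hterm p
      _ = ((n x : ℝ)) ^ 2 * (K1 + K2) := by
          rw [Finset.card_univ, nsmul_eq_mul]
          norm_num [sq]
      _ ≤ (N : ℝ) ^ (2 * (insert x s).card) * ‖A‖ * ∑ y ∈ insert x s, CB Φ B y t := by
          rw [Finset.card_insert_of_notMem hx, Finset.sum_insert hx]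
          have hnx : ((n x : ℝ)) ^ 2 ≤ (N : ℝ) ^ 2 := by
            have : ((n x : ℝ)) ≤ (N : ℝ) := by exact_mod_cast hN x
            have h0 : (0:ℝ) ≤ (n x : ℝ) := by positivity
            nlinarith
          have hstep1 : ((n x : ℝ)) ^ 2 * (K1 + K2) ≤ (N : ℝ) ^ 2 * (K1 + K2) :=
            mul_le_mul_of_nonneg_right hnx hK12
          have hstep2 : K2 ≤ (N : ℝ) ^ (2 * s.card) * K2 :=
            le_mul_of_one_le_left (mul_nonneg (CB_nonneg Φ B t x) (norm_nonneg _)) hpow1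
          have hstep3 : (N : ℝ) ^ 2 * (K1 + K2)
              ≤ (N : ℝ) ^ 2 * (K1 + (N : ℝ) ^ (2 * s.card) * K2) := by
            have : (0:ℝ) ≤ (N : ℝ) ^ 2 := by positivity
            nlinarith
          have hfin : (N : ℝ) ^ 2 * (K1 + (N : ℝ) ^ (2 * s.card) * K2)
              = (N : ℝ) ^ (2 * (s.card + 1)) * ‖A‖ * (CB Φ B x t + ∑ y ∈ s, CB Φ B y t) := by
            rw [hK1, hK2]
            rw [show 2 * (s.card + 1) = 2 * s.card + 2 by ring, pow_add]
            ring
          linarith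
  
end Aux6



open scoped Classical in
/-- For `A ∈ 𝒜_X`: `‖[τ_t(A), B]‖ ≤ N^{2|X|} ‖A‖ ∑_{x ∈ X} C_B(x,t)`. -/
theorem commutator_bound_of_supported
    {V : Type} [Fintype V] [DecidableEq V] [MetricSpace V] {n : V → ℕ}
    (N : ℕ) (hN : ∀ x : V, n x ≤ N)
    (lam : ℝ) (hlam : 0 < lam)
    (Φ : Interaction V n) (X : Set V) (A B : LROp n) (hA : SupportedOn X A) (t : ℝ) :
    ‖Φ.evol t A * B - B * Φ.evol t A‖ ≤
      (N : ℝ) ^ (2 * X.ncard) * ‖A‖ *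
        ∑ x ∈ Finset.univ.filter (fun x : V => x ∈ X), CB Φ B x t := by
  classical
  rcases le_or_gt 1 N with hN1 | hN0
  · have hmain := main_ind N hN1 hN Φ B t X.toFinset A (by rwa [Set.coe_toFinset])
    have hfilter : Finset.univ.filter (fun x : V => x ∈ X) = X.toFinset := by
      ext y; simp
    have hcard : X.ncard = X.toFinset.card := Set.ncard_eq_toFinset_card' X
    rw [hfilter, hcard]
    exact hmain
  · have hN0' : N = 0 := Nat.lt_one_iff.mp hN0
    subst hN0'
    have hn0 : ∀ x : V, n x = 0 := fun x => Nat.le_zero.mp (hN x)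
    have hRHS : (0:ℝ) ≤ ((0:ℕ) : ℝ) ^ (2 * X.ncard) * ‖A‖ *
        ∑ x ∈ Finset.univ.filter (fun x : V => x ∈ X), CB Φ B x t :=
      mul_nonneg (mul_nonneg (by positivity) (norm_nonneg _))
        (Finset.sum_nonneg fun y _ => CB_nonneg Φ B t y)
    by_cases hV : Nonempty V
    · obtain ⟨x0⟩ := hV
      have hempty : IsEmpty (∀ x : V, Fin (n x)) := ⟨fun f => Fin.elim0 (hn0 x0 ▸ f x0)⟩
      have hzero : Φ.evol t A * B - B * Φ.evol t A = 0 := by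
        refine ContinuousLinearMap.ext fun v => ?_
        ext f
        exact hempty.elim f
      rw [hzero, norm_zero]
      exact hRHS
    · have hVempty : IsEmpty V := not_nonempty_iff.mp hV
      have hX : X = ∅ := Set.eq_empty_of_isEmpty X
      subst hX
      obtain ⟨c, rfl⟩ := supported_empty_eq hA
      rw [comm_smul_one, norm_zero]
      exact hRHS
end
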